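/- Let f be a MAC vector field on Omega=(0,L)^3 satisfying the no-penetration boundary condition. Then: (1) there exists a unique pair (u,p), where u is a MAC vector field satisfying the no-penetration and free-slip boundary conditions and p is a zero-mean cell-centered grid function (with Neumann ghost values), such that -Delta_h u + u + grad_h p = -f componentwise at every interior face and div_h u = 0 at every cell; and (2) this u is also the unique MAC vector field satisfying the no-penetration and free-slip boundary conditions such that -Delta_h u + u = -P_H^h f at every interior face, where P_H^h f := f + grad_h q and q is the unique zero-mean cell-centered solution of -Delta_h q = div_h f. -/

import Mathlib

open Finset

noncomputable section

/-! Finite–difference / MAC-grid framework on Ω = (0,L)³ with N cells per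
direction and mesh size h = L/N.  A cell-centered grid function is a map
`ℤ → ℤ → ℤ → ℝ` whose meaningful values are at indices in {1,…,N}³; ghost
values are given by the discrete homogeneous Neumann (reflection) condition,
implemented by clamping indices to {1,…,N}.  The x-component of a MAC vector
field is recorded so that `ux i j k` is the value at the x-face (i+1/2,j,k),
0 ≤ i ≤ N, 1 ≤ j,k ≤ N (analogously for the y,z components), and the
free-slip condition prescribes the tangential ghost values by reflection,
again implemented by clamping the tangential indices. -/

/-- Index clamped into `{1,…,N}`: implements the reflection ghost values. -/
def clampIdx (N : ℕ) (i : ℤ) : ℤ := max 1 (min i (N : ℤ))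

/-- Extension of a cell-centered grid function by the discrete homogeneous
Neumann (reflection) ghost values. -/
def nExt (N : ℕ) (φ : ℤ → ℤ → ℤ → ℝ) (i j k : ℤ) : ℝ :=
  φ (clampIdx N i) (clampIdx N j) (clampIdx N k)

/-- The cell indices `{1,…,N}`. -/
def cellIdx (N : ℕ) : Finset ℤ := Finset.Icc 1 (N : ℤ)

/-- The interior-face indices `{1,…,N-1}`. -/
def faceIdx (N : ℕ) : Finset ℤ := Finset.Icc 1 ((N : ℤ) - 1)

/-- Cell-centered discrete inner product `(φ,ψ) = h³ Σ φψ`. -/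
def cip (N : ℕ) (h : ℝ) (φ ψ : ℤ → ℤ → ℤ → ℝ) : ℝ :=
  h ^ 3 * ∑ i ∈ cellIdx N, ∑ j ∈ cellIdx N, ∑ k ∈ cellIdx N, φ i j k * ψ i j k

/-- Zero discrete mean: `Σ_{i,j,k=1}^N φ_{ijk} = 0`. -/
def zeroMean (N : ℕ) (φ : ℤ → ℤ → ℤ → ℝ) : Prop :=
  ∑ i ∈ cellIdx N, ∑ j ∈ cellIdx N, ∑ k ∈ cellIdx N, φ i j k = 0

/-- Two cell-centered functions agree on all cells. -/
def CellEqOn (N : ℕ) (φ ψ : ℤ → ℤ → ℤ → ℝ) : Prop :=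
  ∀ i ∈ cellIdx N, ∀ j ∈ cellIdx N, ∀ k ∈ cellIdx N, φ i j k = ψ i j k

/-- Discrete maximum norm over the cells. -/
def cInf (N : ℕ) (φ : ℤ → ℤ → ℤ → ℝ) : ℝ :=
  sSup {r : ℝ | ∃ i ∈ cellIdx N, ∃ j ∈ cellIdx N, ∃ k ∈ cellIdx N, r = |φ i j k|}

/-- `D_x φ` at the x-face `(i+1/2,j,k)` (recorded at index `(i,j,k)`);
it vanishes at the boundary faces `i = 0, N` by the Neumann ghost values. -/
def Dx (N : ℕ) (h : ℝ) (φ : ℤ → ℤ → ℤ → ℝ) (i j k : ℤ) : ℝ :=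
  (nExt N φ (i + 1) j k - nExt N φ i j k) / h

/-- `D_y φ` at the y-face `(i,j+1/2,k)`. -/
def Dy (N : ℕ) (h : ℝ) (φ : ℤ → ℤ → ℤ → ℝ) (i j k : ℤ) : ℝ :=
  (nExt N φ i (j + 1) k - nExt N φ i j k) / h

/-- `D_z φ` at the z-face `(i,j,k+1/2)`. -/
def Dz (N : ℕ) (h : ℝ) (φ : ℤ → ℤ → ℤ → ℝ) (i j k : ℤ) : ℝ :=
  (nExt N φ i j (k + 1) - nExt N φ i j k) / h

/-- Cell-centered discrete Laplacian, using the Neumann ghost values. -/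
def lapC (N : ℕ) (h : ℝ) (φ : ℤ → ℤ → ℤ → ℝ) (i j k : ℤ) : ℝ :=
  (nExt N φ (i + 1) j k + nExt N φ (i - 1) j k + nExt N φ i (j + 1) k +
      nExt N φ i (j - 1) k + nExt N φ i j (k + 1) + nExt N φ i j (k - 1) -
      6 * nExt N φ i j k) / h ^ 2

/-- `‖∇_h φ‖₂²`: sum of squared differences over all interior faces. -/
def gradSq (N : ℕ) (h : ℝ) (φ : ℤ → ℤ → ℤ → ℝ) : ℝ :=
  h ^ 3 *
    ((∑ i ∈ faceIdx N, ∑ j ∈ cellIdx N, ∑ k ∈ cellIdx N, Dx N h φ i j k ^ 2) +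
      (∑ i ∈ cellIdx N, ∑ j ∈ faceIdx N, ∑ k ∈ cellIdx N, Dy N h φ i j k ^ 2) +
      (∑ i ∈ cellIdx N, ∑ j ∈ cellIdx N, ∑ k ∈ faceIdx N, Dz N h φ i j k ^ 2))

/-- Face inner product `[f,g]_x`. -/
def ipFX (N : ℕ) (h : ℝ) (f g : ℤ → ℤ → ℤ → ℝ) : ℝ :=
  h ^ 3 / 2 * ∑ i ∈ cellIdx N, ∑ j ∈ cellIdx N, ∑ k ∈ cellIdx N,
    (f i j k * g i j k + f (i - 1) j k * g (i - 1) j k)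

/-- Face inner product `[f,g]_y`. -/
def ipFY (N : ℕ) (h : ℝ) (f g : ℤ → ℤ → ℤ → ℝ) : ℝ :=
  h ^ 3 / 2 * ∑ i ∈ cellIdx N, ∑ j ∈ cellIdx N, ∑ k ∈ cellIdx N,
    (f i j k * g i j k + f i (j - 1) k * g i (j - 1) k)

/-- Face inner product `[f,g]_z`. -/
def ipFZ (N : ℕ) (h : ℝ) (f g : ℤ → ℤ → ℤ → ℝ) : ℝ :=
  h ^ 3 / 2 * ∑ i ∈ cellIdx N, ∑ j ∈ cellIdx N, ∑ k ∈ cellIdx N,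
    (f i j k * g i j k + f i j (k - 1) * g i j (k - 1))

/-- MAC inner product of two vector fields. -/
def macIP (N : ℕ) (h : ℝ) (ux uy uz vx vy vz : ℤ → ℤ → ℤ → ℝ) : ℝ :=
  ipFX N h ux vx + ipFY N h uy vy + ipFZ N h uz vz

/-- Discrete divergence at the cell `(i,j,k)`. -/
def divH (h : ℝ) (ux uy uz : ℤ → ℤ → ℤ → ℝ) (i j k : ℤ) : ℝ :=
  (ux i j k - ux (i - 1) j k + uy i j k - uy i (j - 1) k +
    uz i j k - uz i j (k - 1)) / h

/-- No-penetration boundary condition: the normal boundary face values vanish. -/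
def NoPen (N : ℕ) (ux uy uz : ℤ → ℤ → ℤ → ℝ) : Prop :=
  (∀ j ∈ cellIdx N, ∀ k ∈ cellIdx N, ux 0 j k = 0 ∧ ux (N : ℤ) j k = 0) ∧
  (∀ i ∈ cellIdx N, ∀ k ∈ cellIdx N, uy i 0 k = 0 ∧ uy i (N : ℤ) k = 0) ∧
  (∀ i ∈ cellIdx N, ∀ j ∈ cellIdx N, uz i j 0 = 0 ∧ uz i j (N : ℤ) = 0)

/-- Free-slip (reflection) extension of the x-face component in the
tangential directions. -/
def fExtX (N : ℕ) (f : ℤ → ℤ → ℤ → ℝ) (i j k : ℤ) : ℝ :=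
  f i (clampIdx N j) (clampIdx N k)

/-- Free-slip extension of the y-face component. -/
def fExtY (N : ℕ) (f : ℤ → ℤ → ℤ → ℝ) (i j k : ℤ) : ℝ :=
  f (clampIdx N i) j (clampIdx N k)

/-- Free-slip extension of the z-face component. -/
def fExtZ (N : ℕ) (f : ℤ → ℤ → ℤ → ℝ) (i j k : ℤ) : ℝ :=
  f (clampIdx N i) (clampIdx N j) k

/-- Face-centered discrete Laplacian of the x-component (seven-point stencil,
free-slip ghost values in the tangential directions). -/
def lapFX (N : ℕ) (h : ℝ) (f : ℤ → ℤ → ℤ → ℝ) (i j k : ℤ) : ℝ :=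
  (fExtX N f (i + 1) j k + fExtX N f (i - 1) j k + fExtX N f i (j + 1) k +
      fExtX N f i (j - 1) k + fExtX N f i j (k + 1) + fExtX N f i j (k - 1) -
      6 * fExtX N f i j k) / h ^ 2

/-- Face-centered discrete Laplacian of the y-component. -/
def lapFY (N : ℕ) (h : ℝ) (f : ℤ → ℤ → ℤ → ℝ) (i j k : ℤ) : ℝ :=
  (fExtY N f (i + 1) j k + fExtY N f (i - 1) j k + fExtY N f i (j + 1) k +
      fExtY N f i (j - 1) k + fExtY N f i j (k + 1) + fExtY N f i j (k - 1) -
      6 * fExtY N f i j k) / h ^ 2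

/-- Face-centered discrete Laplacian of the z-component. -/
def lapFZ (N : ℕ) (h : ℝ) (f : ℤ → ℤ → ℤ → ℝ) (i j k : ℤ) : ℝ :=
  (fExtZ N f (i + 1) j k + fExtZ N f (i - 1) j k + fExtZ N f i (j + 1) k +
      fExtZ N f i (j - 1) k + fExtZ N f i j (k + 1) + fExtZ N f i j (k - 1) -
      6 * fExtZ N f i j k) / h ^ 2

/-- Face average `A_x φ` at the x-face `(i+1/2,j,k)`. -/
def AxF (N : ℕ) (φ : ℤ → ℤ → ℤ → ℝ) (i j k : ℤ) : ℝ :=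
  (nExt N φ (i + 1) j k + nExt N φ i j k) / 2

/-- Face average `A_y φ`. -/
def AyF (N : ℕ) (φ : ℤ → ℤ → ℤ → ℝ) (i j k : ℤ) : ℝ :=
  (nExt N φ i (j + 1) k + nExt N φ i j k) / 2

/-- Face average `A_z φ`. -/
def AzF (N : ℕ) (φ : ℤ → ℤ → ℤ → ℝ) (i j k : ℤ) : ℝ :=
  (nExt N φ i j (k + 1) + nExt N φ i j k) / 2

/-- The coupled discrete Stokes system with data `f`: `u` satisfies
no-penetration (free-slip ghost values are built into `lapFX/lapFY/lapFZ`),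
`p` has zero mean, the momentum equations `-Δ_h u + u + ∇_h p = -f` hold at
every interior face, and `∇_h · u = 0` at every cell. -/
def StokesSol (N : ℕ) (h : ℝ) (fx fy fz ux uy uz p : ℤ → ℤ → ℤ → ℝ) : Prop :=
  NoPen N ux uy uz ∧ zeroMean N p ∧
  (∀ i ∈ faceIdx N, ∀ j ∈ cellIdx N, ∀ k ∈ cellIdx N,
    -lapFX N h ux i j k + ux i j k + Dx N h p i j k = -fx i j k) ∧
  (∀ i ∈ cellIdx N, ∀ j ∈ faceIdx N, ∀ k ∈ cellIdx N,
    -lapFY N h uy i j k + uy i j k + Dy N h p i j k = -fy i j k) ∧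
  (∀ i ∈ cellIdx N, ∀ j ∈ cellIdx N, ∀ k ∈ faceIdx N,
    -lapFZ N h uz i j k + uz i j k + Dz N h p i j k = -fz i j k) ∧
  (∀ i ∈ cellIdx N, ∀ j ∈ cellIdx N, ∀ k ∈ cellIdx N, divH h ux uy uz i j k = 0)

/-- The projected problem with data `g`: `u` satisfies no-penetration
(free-slip ghosts built into the face Laplacians) and
`-Δ_h u + u = -g` at every interior face. -/
def ProjSol (N : ℕ) (h : ℝ) (gx gy gz ux uy uz : ℤ → ℤ → ℤ → ℝ) : Prop :=
  NoPen N ux uy uz ∧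
  (∀ i ∈ faceIdx N, ∀ j ∈ cellIdx N, ∀ k ∈ cellIdx N,
    -lapFX N h ux i j k + ux i j k = -gx i j k) ∧
  (∀ i ∈ cellIdx N, ∀ j ∈ faceIdx N, ∀ k ∈ cellIdx N,
    -lapFY N h uy i j k + uy i j k = -gy i j k) ∧
  (∀ i ∈ cellIdx N, ∀ j ∈ cellIdx N, ∀ k ∈ faceIdx N,
    -lapFZ N h uz i j k + uz i j k = -gz i j k)

/-- Two MAC vector fields agree at all (meaningful) faces. -/
def MacEqOn (N : ℕ) (ux uy uz vx vy vz : ℤ → ℤ → ℤ → ℝ) : Prop :=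
  (∀ i ∈ Finset.Icc 0 (N : ℤ), ∀ j ∈ cellIdx N, ∀ k ∈ cellIdx N, ux i j k = vx i j k) ∧
  (∀ i ∈ cellIdx N, ∀ j ∈ Finset.Icc 0 (N : ℤ), ∀ k ∈ cellIdx N, uy i j k = vy i j k) ∧
  (∀ i ∈ cellIdx N, ∀ j ∈ cellIdx N, ∀ k ∈ Finset.Icc 0 (N : ℤ), uz i j k = vz i j k)

section Aux

lemma zmem_cell {N : ℕ} {i : ℤ} : i ∈ cellIdx N ↔ 1 ≤ i ∧ i ≤ (N:ℤ) := by
  simp [cellIdx]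

lemma zmem_face {N : ℕ} {i : ℤ} : i ∈ faceIdx N ↔ 1 ≤ i ∧ i ≤ (N:ℤ) - 1 := by
  simp [faceIdx]

lemma clamp_of_mem {N : ℕ} {i : ℤ} (h1 : 1 ≤ i) (h2 : i ≤ (N:ℤ)) : clampIdx N i = i := by
  unfold clampIdx; omega

lemma clamp_mem {N : ℕ} (hN : 0 < N) (i : ℤ) : clampIdx N i ∈ cellIdx N := by
  rw [zmem_cell]; unfold clampIdx; omega

lemma clamp_clamp {N : ℕ} (hN : 0 < N) (i : ℤ) :
    clampIdx N (clampIdx N i) = clampIdx N i := by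
  unfold clampIdx; omega

lemma clamp_zero {N : ℕ} (hN : 0 < N) : clampIdx N 0 = 1 := by unfold clampIdx; omega
lemma clamp_one {N : ℕ} (hN : 0 < N) : clampIdx N 1 = 1 := by unfold clampIdx; omega
lemma clamp_top {N : ℕ} (hN : 0 < N) : clampIdx N ((N:ℤ)+1) = N := by unfold clampIdx; omega
lemma clamp_N {N : ℕ} (hN : 0 < N) : clampIdx N (N:ℤ) = N := by unfold clampIdx; omega

lemma izm1p1 (a : ℤ) : a - 1 + 1 = a := by ring
lemma izp1m1 (a : ℤ) : a + 1 - 1 = a := by ring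

lemma sum_tele (g : ℤ → ℝ) (n : ℕ) :
    ∑ i ∈ Finset.Icc (1:ℤ) n, (g i - g (i-1)) = g n - g 0 := by
  induction n with
  | zero => simp
  | succ m ih =>
    have hins : Finset.Icc (1:ℤ) ((m:ℤ)+1) = insert ((m:ℤ)+1) (Finset.Icc (1:ℤ) m) := by
      ext x; simp only [Finset.mem_Icc, Finset.mem_insert]; omega
    rw [show ((m+1 : ℕ):ℤ) = (m:ℤ)+1 by push_cast; ring, hins,
      Finset.sum_insert (by simp)]
    rw [izp1m1, ih]; ring

lemma sum_cell_tele {N : ℕ} (g : ℤ → ℝ) (h0 : g 0 = 0) (hN' : g (N:ℤ) = 0) :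
    ∑ i ∈ cellIdx N, (g i - g (i-1)) = 0 := by
  unfold cellIdx; rw [sum_tele g N, hN', h0]; ring

lemma card_cell {N : ℕ} : (cellIdx N).card = N := by
  simp [cellIdx]

end Aux
section Aux2

/-- Pointwise linearity-style lemmas. -/
lemma lapC_add3 {N : ℕ} {h : ℝ} (f1 f2 f3 : ℤ → ℤ → ℤ → ℝ) (i j k : ℤ) :
    lapC N h (fun a b c => f1 a b c + f2 a b c + f3 a b c) i j k
      = lapC N h f1 i j k + lapC N h f2 i j k + lapC N h f3 i j k := by
  simp only [lapC, nExt]; ring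

lemma lapC_sub {N : ℕ} {h : ℝ} (f g : ℤ → ℤ → ℤ → ℝ) (i j k : ℤ) :
    lapC N h (fun a b c => f a b c - g a b c) i j k
      = lapC N h f i j k - lapC N h g i j k := by
  simp only [lapC, nExt]; ring

lemma lapC_neg {N : ℕ} {h : ℝ} (f : ℤ → ℤ → ℤ → ℝ) (i j k : ℤ) :
    lapC N h (fun a b c => -f a b c) i j k = -lapC N h f i j k := by
  simp only [lapC, nExt]; ring

lemma lapC_congr {N : ℕ} (hN : 0 < N) {h : ℝ} {f g : ℤ → ℤ → ℤ → ℝ}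
    (hfg : ∀ i ∈ cellIdx N, ∀ j ∈ cellIdx N, ∀ k ∈ cellIdx N, f i j k = g i j k)
    (i j k : ℤ) : lapC N h f i j k = lapC N h g i j k := by
  simp only [lapC, nExt]
  rw [hfg _ (clamp_mem hN _) _ (clamp_mem hN _) _ (clamp_mem hN _),
    hfg _ (clamp_mem hN _) _ (clamp_mem hN _) _ (clamp_mem hN _),
    hfg _ (clamp_mem hN _) _ (clamp_mem hN _) _ (clamp_mem hN _),
    hfg _ (clamp_mem hN _) _ (clamp_mem hN _) _ (clamp_mem hN _),
    hfg _ (clamp_mem hN _) _ (clamp_mem hN _) _ (clamp_mem hN _),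
    hfg _ (clamp_mem hN _) _ (clamp_mem hN _) _ (clamp_mem hN _),
    hfg _ (clamp_mem hN _) _ (clamp_mem hN _) _ (clamp_mem hN _)]

lemma lapC_zero_on {N : ℕ} (hN : 0 < N) {h : ℝ} {f : ℤ → ℤ → ℤ → ℝ}
    (hf : ∀ i ∈ cellIdx N, ∀ j ∈ cellIdx N, ∀ k ∈ cellIdx N, f i j k = 0)
    (i j k : ℤ) : lapC N h f i j k = 0 := by
  rw [lapC_congr hN (g := fun _ _ _ => (0:ℝ)) hf]; simp [lapC, nExt]

lemma lapFX_sub {N : ℕ} {h : ℝ} (f g : ℤ → ℤ → ℤ → ℝ) (i j k : ℤ) :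
    lapFX N h (fun a b c => f a b c - g a b c) i j k
      = lapFX N h f i j k - lapFX N h g i j k := by
  simp only [lapFX, fExtX]; ring

lemma lapFX_neg {N : ℕ} {h : ℝ} (f : ℤ → ℤ → ℤ → ℝ) (i j k : ℤ) :
    lapFX N h (fun a b c => -f a b c) i j k = -lapFX N h f i j k := by
  simp only [lapFX, fExtX]; ring

lemma lapFY_swap {N : ℕ} {h : ℝ} (f : ℤ → ℤ → ℤ → ℝ) (i j k : ℤ) :
    lapFY N h f i j k = lapFX N h (fun a b c => f b a c) j i k := by
  simp only [lapFX, lapFY, fExtX, fExtY]; ring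

lemma lapFZ_swap {N : ℕ} {h : ℝ} (f : ℤ → ℤ → ℤ → ℝ) (i j k : ℤ) :
    lapFZ N h f i j k = lapFX N h (fun a b c => f c b a) k j i := by
  simp only [lapFX, lapFZ, fExtX, fExtZ]; ring

lemma lapC_swap12 {N : ℕ} {h : ℝ} (f : ℤ → ℤ → ℤ → ℝ) (i j k : ℤ) :
    lapC N h (fun a b c => f b a c) i j k = lapC N h f j i k := by
  simp only [lapC, nExt]; ring

lemma lapC_swap13 {N : ℕ} {h : ℝ} (f : ℤ → ℤ → ℤ → ℝ) (i j k : ℤ) :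
    lapC N h (fun a b c => f c b a) i j k = lapC N h f k j i := by
  simp only [lapC, nExt]; ring

/-- div of a gradient is the cell Laplacian (everywhere). -/
lemma div_grad {N : ℕ} {h : ℝ} (q : ℤ → ℤ → ℤ → ℝ) (i j k : ℤ) :
    divH h (Dx N h q) (Dy N h q) (Dz N h q) i j k = lapC N h q i j k := by
  simp only [divH, Dx, Dy, Dz, lapC, izm1p1]; ring

/-- Gradient vanishes at boundary faces. -/
lemma Dx_bdry0 {N : ℕ} (hN : 0 < N) {h : ℝ} (q : ℤ → ℤ → ℤ → ℝ) (j k : ℤ) :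
    Dx N h q 0 j k = 0 := by
  simp only [Dx, nExt, zero_add, clamp_zero hN, clamp_one hN, sub_self, zero_div]

lemma Dx_bdryN {N : ℕ} (hN : 0 < N) {h : ℝ} (q : ℤ → ℤ → ℤ → ℝ) (j k : ℤ) :
    Dx N h q (N:ℤ) j k = 0 := by
  simp only [Dx, nExt, clamp_top hN, clamp_N hN, sub_self, zero_div]

end Aux2
section MaxP

/-- Maximum principle for the cell Helmholtz operator. -/
lemma maxpC_nonpos {N : ℕ} (hN : 0 < N) {h : ℝ} (hh : 0 < h) (d : ℤ → ℤ → ℤ → ℝ)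
    (he : ∀ i ∈ cellIdx N, ∀ j ∈ cellIdx N, ∀ k ∈ cellIdx N,
      -lapC N h d i j k + d i j k = 0) :
    ∀ i ∈ cellIdx N, ∀ j ∈ cellIdx N, ∀ k ∈ cellIdx N, d i j k ≤ 0 := by
  intro i hi j hj k hk
  set F : Finset (ℤ × ℤ × ℤ) := (cellIdx N) ×ˢ ((cellIdx N) ×ˢ (cellIdx N)) with hF
  have hne : F.Nonempty := ⟨(i, j, k), by simp [hF, Finset.mem_product, hi, hj, hk]⟩
  obtain ⟨c, hc, hmax⟩ := F.exists_max_image (fun c => d c.1 c.2.1 c.2.2) hne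
  obtain ⟨a, b, e⟩ := c
  simp only [hF, Finset.mem_product] at hc
  obtain ⟨ha, hb, hec⟩ := hc
  have key : d a b e ≤ 0 := by
    by_contra hpos
    push_neg at hpos
    have heq := he a ha b hb e hec
    have hb1 := (zmem_cell.1 hb).1; have hb2 := (zmem_cell.1 hb).2
    have ha1 := (zmem_cell.1 ha).1; have ha2 := (zmem_cell.1 ha).2
    have he1 := (zmem_cell.1 hec).1; have he2 := (zmem_cell.1 hec).2
    have hctr : nExt N d a b e = d a b e := by
      simp [nExt, clamp_of_mem ha1 ha2, clamp_of_mem hb1 hb2, clamp_of_mem he1 he2]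
    have hn : ∀ a' b' e', nExt N d a' b' e' ≤ d a b e := by
      intro a' b' e'
      exact hmax (clampIdx N a', clampIdx N b', clampIdx N e')
        (by simp [hF, Finset.mem_product, clamp_mem hN])
    have h1 := hn (a+1) b e; have h2 := hn (a-1) b e
    have h3 := hn a (b+1) e; have h4 := hn a (b-1) e
    have h5 := hn a b (e+1); have h6 := hn a b (e-1)
    rw [lapC, hctr] at heq
    have hh2 : (0:ℝ) < h^2 := by positivity
    have heq2 : (nExt N d (a+1) b e + nExt N d (a-1) b e + nExt N d a (b+1) e +
        nExt N d a (b-1) e + nExt N d a b (e+1) + nExt N d a b (e-1) - 6 * d a b e)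
        = h^2 * (d a b e) := by
      field_simp at heq; linarith
    nlinarith
  calc d i j k ≤ d a b e :=
        hmax (i, j, k) (by simp [hF, Finset.mem_product, hi, hj, hk])
    _ ≤ 0 := key

lemma maxpC {N : ℕ} (hN : 0 < N) {h : ℝ} (hh : 0 < h) (d : ℤ → ℤ → ℤ → ℝ)
    (he : ∀ i ∈ cellIdx N, ∀ j ∈ cellIdx N, ∀ k ∈ cellIdx N,
      -lapC N h d i j k + d i j k = 0) :
    ∀ i ∈ cellIdx N, ∀ j ∈ cellIdx N, ∀ k ∈ cellIdx N, d i j k = 0 := by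
  intro i hi j hj k hk
  have h1 := maxpC_nonpos hN hh d he i hi j hj k hk
  have h2 := maxpC_nonpos hN hh (fun a b c => -d a b c)
    (by intro a ha b hb c hc
        rw [lapC_neg]
        have := he a ha b hb c hc; linarith)
    i hi j hj k hk
  linarith

/-- Maximum principle for the x-face Helmholtz operator with zero normal
boundary values. -/
lemma maxpX_nonpos {N : ℕ} (hN : 0 < N) {h : ℝ} (hh : 0 < h) (w : ℤ → ℤ → ℤ → ℝ)
    (hb : ∀ j ∈ cellIdx N, ∀ k ∈ cellIdx N, w 0 j k = 0 ∧ w (N:ℤ) j k = 0)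
    (he : ∀ i ∈ faceIdx N, ∀ j ∈ cellIdx N, ∀ k ∈ cellIdx N,
      -lapFX N h w i j k + w i j k = 0) :
    ∀ i ∈ faceIdx N, ∀ j ∈ cellIdx N, ∀ k ∈ cellIdx N, w i j k ≤ 0 := by
  intro i hi j hj k hk
  set F : Finset (ℤ × ℤ × ℤ) := (faceIdx N) ×ˢ ((cellIdx N) ×ˢ (cellIdx N)) with hF
  have hne : F.Nonempty := ⟨(i, j, k), by simp [hF, Finset.mem_product, hi, hj, hk]⟩
  obtain ⟨c, hc, hmax⟩ := F.exists_max_image (fun c => w c.1 c.2.1 c.2.2) hne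
  obtain ⟨a, b, e⟩ := c
  simp only [hF, Finset.mem_product] at hc
  obtain ⟨ha, hb', hec⟩ := hc
  have key : w a b e ≤ 0 := by
    by_contra hpos
    push_neg at hpos
    have heq := he a ha b hb' e hec
    have hb1 := (zmem_cell.1 hb').1; have hb2 := (zmem_cell.1 hb').2
    have ha1 := (zmem_face.1 ha).1; have ha2 := (zmem_face.1 ha).2
    have he1 := (zmem_cell.1 hec).1; have he2 := (zmem_cell.1 hec).2
    have hctr : fExtX N w a b e = w a b e := by
      simp [fExtX, clamp_of_mem hb1 hb2, clamp_of_mem he1 he2]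
    -- tangential neighbours
    have hnt : ∀ b' e', fExtX N w a b' e' ≤ w a b e := by
      intro b' e'
      exact hmax (a, clampIdx N b', clampIdx N e')
        (by simp [hF, Finset.mem_product, ha, clamp_mem hN])
    -- normal neighbours
    have hnorm : ∀ a', 0 ≤ a' → a' ≤ (N:ℤ) → fExtX N w a' b e ≤ w a b e := by
      intro a' h0 hN'
      have hfe : fExtX N w a' b e = w a' b e := by
        simp [fExtX, clamp_of_mem hb1 hb2, clamp_of_mem he1 he2]
      rw [hfe]
      rcases eq_or_lt_of_le h0 with h0' | h0'
      · rw [← h0']; rw [(hb b hb' e hec).1]; linarith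
      rcases eq_or_lt_of_le hN' with hN'' | hN''
      · rw [hN'']; rw [(hb b hb' e hec).2]; linarith
      · exact hmax (a', b, e)
          (by simp [hF, Finset.mem_product, zmem_face, zmem_cell] at *; omega)
    have h1 := hnorm (a+1) (by omega) (by omega)
    have h2 := hnorm (a-1) (by omega) (by omega)
    have h3 := hnt (b+1) e; have h4 := hnt (b-1) e
    have h5 := hnt b (e+1); have h6 := hnt b (e-1)
    rw [lapFX, hctr] at heq
    have hh2 : (0:ℝ) < h^2 := by positivity
    have heq2 : (fExtX N w (a+1) b e + fExtX N w (a-1) b e + fExtX N w a (b+1) e +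
        fExtX N w a (b-1) e + fExtX N w a b (e+1) + fExtX N w a b (e-1) - 6 * w a b e)
        = h^2 * (w a b e) := by
      field_simp at heq; linarith
    nlinarith
  calc w i j k ≤ w a b e :=
        hmax (i, j, k) (by simp [hF, Finset.mem_product, hi, hj, hk])
    _ ≤ 0 := key

lemma maxpX {N : ℕ} (hN : 0 < N) {h : ℝ} (hh : 0 < h) (w : ℤ → ℤ → ℤ → ℝ)
    (hb : ∀ j ∈ cellIdx N, ∀ k ∈ cellIdx N, w 0 j k = 0 ∧ w (N:ℤ) j k = 0)
    (he : ∀ i ∈ faceIdx N, ∀ j ∈ cellIdx N, ∀ k ∈ cellIdx N,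
      -lapFX N h w i j k + w i j k = 0) :
    ∀ i ∈ faceIdx N, ∀ j ∈ cellIdx N, ∀ k ∈ cellIdx N, w i j k = 0 := by
  intro i hi j hj k hk
  have h1 := maxpX_nonpos hN hh w hb he i hi j hj k hk
  have h2 := maxpX_nonpos hN hh (fun a b c => -w a b c)
    (by intro j hj k hk; constructor <;> simp [(hb j hj k hk).1, (hb j hj k hk).2])
    (by intro a ha b hb' c hc
        rw [lapFX_neg]
        have := he a ha b hb' c hc; linarith)
    i hi j hj k hk
  linarith

end MaxP
section Const

lemma lineSpread {N : ℕ} (hN : 0 < N) (P : ℤ → Prop) {i0 : ℤ} (h01 : 1 ≤ i0)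
    (h0N : i0 ≤ (N:ℤ)) (hP : P i0)
    (hstep : ∀ i, 1 ≤ i → i ≤ (N:ℤ) → P i →
      P (clampIdx N (i+1)) ∧ P (clampIdx N (i-1))) :
    ∀ i, 1 ≤ i → i ≤ (N:ℤ) → P i := by
  have up : ∀ i, i0 ≤ i → i ≤ (N:ℤ) → P i := by
    refine Int.le_induction (motive := fun i _ => i ≤ (N:ℤ) → P i) (fun _ => hP) ?_
    intro n hn ih hle
    have hPn : P n := ih (by omega)
    have := (hstep n (by omega) (by omega) hPn).1
    rwa [clamp_of_mem (by omega) (by omega)] at this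
  have down : ∀ i, i ≤ i0 → 1 ≤ i → P i := by
    refine Int.le_induction_down (motive := fun i _ => 1 ≤ i → P i) (fun _ => hP) ?_
    intro n hn ih hle
    have hPn : P n := ih (by omega)
    have := (hstep n (by omega) (by omega) hPn).2
    rwa [clamp_of_mem (by omega) (by omega)] at this
  intro i h1 h2
  rcases le_total i0 i with hc | hc
  · exact up i hc h2
  · exact down i hc h1

/-- A cell function with vanishing discrete Neumann Laplacian is constant. -/
lemma lap_zero_const {N : ℕ} (hN : 0 < N) {h : ℝ} (hh : 0 < h) (φ : ℤ → ℤ → ℤ → ℝ)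
    (hl : ∀ i ∈ cellIdx N, ∀ j ∈ cellIdx N, ∀ k ∈ cellIdx N, lapC N h φ i j k = 0) :
    ∀ i ∈ cellIdx N, ∀ j ∈ cellIdx N, ∀ k ∈ cellIdx N, φ i j k = φ 1 1 1 := by
  have h1c : (1:ℤ) ∈ cellIdx N := by rw [zmem_cell]; omega
  set F : Finset (ℤ × ℤ × ℤ) := (cellIdx N) ×ˢ ((cellIdx N) ×ˢ (cellIdx N)) with hF
  have hne : F.Nonempty := ⟨(1,1,1), by simp [hF, Finset.mem_product, h1c]⟩
  obtain ⟨c, hc, hmax⟩ := F.exists_max_image (fun c => φ c.1 c.2.1 c.2.2) hne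
  obtain ⟨a, b, e⟩ := c
  simp only [hF, Finset.mem_product] at hc
  obtain ⟨ha, hb, hec⟩ := hc
  set M := φ a b e with hM
  -- neighbour propagation
  have nbr : ∀ i ∈ cellIdx N, ∀ j ∈ cellIdx N, ∀ k ∈ cellIdx N, φ i j k = M →
      (φ (clampIdx N (i+1)) j k = M ∧ φ (clampIdx N (i-1)) j k = M) ∧
      (φ i (clampIdx N (j+1)) k = M ∧ φ i (clampIdx N (j-1)) k = M) ∧
      (φ i j (clampIdx N (k+1)) = M ∧ φ i j (clampIdx N (k-1)) = M) := by
    intro i hi j hj k hk hMv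
    have hi1 := (zmem_cell.1 hi).1; have hi2 := (zmem_cell.1 hi).2
    have hj1 := (zmem_cell.1 hj).1; have hj2 := (zmem_cell.1 hj).2
    have hk1 := (zmem_cell.1 hk).1; have hk2 := (zmem_cell.1 hk).2
    have heq := hl i hi j hj k hk
    rw [lapC] at heq
    have hctr : nExt N φ i j k = M := by
      rw [nExt, clamp_of_mem hi1 hi2, clamp_of_mem hj1 hj2, clamp_of_mem hk1 hk2, hMv]
    have hn : ∀ a' b' e', nExt N φ a' b' e' ≤ M := by
      intro a' b' e'
      exact hmax (clampIdx N a', clampIdx N b', clampIdx N e')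
        (by simp [hF, Finset.mem_product, clamp_mem hN])
    have h1 := hn (i+1) j k; have h2 := hn (i-1) j k
    have h3 := hn i (j+1) k; have h4 := hn i (j-1) k
    have h5 := hn i j (k+1); have h6 := hn i j (k-1)
    have hh2 : (h:ℝ)^2 ≠ 0 := by positivity
    have hsum : nExt N φ (i+1) j k + nExt N φ (i-1) j k + nExt N φ i (j+1) k +
        nExt N φ i (j-1) k + nExt N φ i j (k+1) + nExt N φ i j (k-1) = 6 * M := by
      rw [hctr] at heq
      field_simp at heq; linarith
    have e1 : nExt N φ (i+1) j k = M := by linarith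
    have e2 : nExt N φ (i-1) j k = M := by linarith
    have e3 : nExt N φ i (j+1) k = M := by linarith
    have e4 : nExt N φ i (j-1) k = M := by linarith
    have e5 : nExt N φ i j (k+1) = M := by linarith
    have e6 : nExt N φ i j (k-1) = M := by linarith
    rw [nExt, clamp_of_mem hj1 hj2, clamp_of_mem hk1 hk2] at e1 e2
    rw [nExt, clamp_of_mem hi1 hi2, clamp_of_mem hk1 hk2] at e3 e4
    rw [nExt, clamp_of_mem hi1 hi2, clamp_of_mem hj1 hj2] at e5 e6
    exact ⟨⟨e1, e2⟩, ⟨e3, e4⟩, ⟨e5, e6⟩⟩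
  -- spread over all cells
  have ha1 := (zmem_cell.1 ha).1; have ha2 := (zmem_cell.1 ha).2
  have hb1 := (zmem_cell.1 hb).1; have hb2 := (zmem_cell.1 hb).2
  have he1 := (zmem_cell.1 hec).1; have he2 := (zmem_cell.1 hec).2
  have sx : ∀ i, 1 ≤ i → i ≤ (N:ℤ) → φ i b e = M := by
    refine lineSpread hN (fun i => φ i b e = M) ha1 ha2 rfl ?_
    intro i h1 h2 hPi
    exact ⟨((nbr i (zmem_cell.2 ⟨h1,h2⟩) b hb e hec hPi).1).1,
      ((nbr i (zmem_cell.2 ⟨h1,h2⟩) b hb e hec hPi).1).2⟩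
  have sxy : ∀ i, 1 ≤ i → i ≤ (N:ℤ) → ∀ j, 1 ≤ j → j ≤ (N:ℤ) → φ i j e = M := by
    intro i h1 h2
    refine lineSpread hN (fun j => φ i j e = M) hb1 hb2 (sx i h1 h2) ?_
    intro j hj1 hj2 hPj
    exact ⟨((nbr i (zmem_cell.2 ⟨h1,h2⟩) j (zmem_cell.2 ⟨hj1,hj2⟩) e hec hPj).2).1.1,
      ((nbr i (zmem_cell.2 ⟨h1,h2⟩) j (zmem_cell.2 ⟨hj1,hj2⟩) e hec hPj).2).1.2⟩
  have sxyz : ∀ i, 1 ≤ i → i ≤ (N:ℤ) → ∀ j, 1 ≤ j → j ≤ (N:ℤ) →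
      ∀ k, 1 ≤ k → k ≤ (N:ℤ) → φ i j k = M := by
    intro i h1 h2 j hj1 hj2
    refine lineSpread hN (fun k => φ i j k = M) he1 he2 (sxy i h1 h2 j hj1 hj2) ?_
    intro k hk1 hk2 hPk
    exact ⟨((nbr i (zmem_cell.2 ⟨h1,h2⟩) j (zmem_cell.2 ⟨hj1,hj2⟩) k
        (zmem_cell.2 ⟨hk1,hk2⟩) hPk).2).2.1,
      ((nbr i (zmem_cell.2 ⟨h1,h2⟩) j (zmem_cell.2 ⟨hj1,hj2⟩) k
        (zmem_cell.2 ⟨hk1,hk2⟩) hPk).2).2.2⟩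
  have h111 : φ 1 1 1 = M := sxyz 1 (by omega) (by omega) 1 (by omega) (by omega)
    1 (by omega) (by omega)
  intro i hi j hj k hk
  rw [h111]
  exact sxyz i (zmem_cell.1 hi).1 (zmem_cell.1 hi).2 j (zmem_cell.1 hj).1
    (zmem_cell.1 hj).2 k (zmem_cell.1 hk).1 (zmem_cell.1 hk).2

end Const
section LinAlg

abbrev CellT (N : ℕ) := {x : ℤ // x ∈ cellIdx N}
abbrev FaceT (N : ℕ) := {x : ℤ // x ∈ faceIdx N}

def toC {N : ℕ} (hN : 0 < N) (i : ℤ) : CellT N := ⟨clampIdx N i, clamp_mem hN i⟩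

def extC {N : ℕ} (hN : 0 < N) (v : (CellT N × CellT N × CellT N) → ℝ) :
    ℤ → ℤ → ℤ → ℝ := fun i j k => v (toC hN i, toC hN j, toC hN k)

lemma toC_clamp {N : ℕ} (hN : 0 < N) (i : ℤ) : toC hN (clampIdx N i) = toC hN i := by
  unfold toC; exact Subtype.ext (clamp_clamp hN i)

lemma toC_of_mem {N : ℕ} (hN : 0 < N) {i : ℤ} (hi : i ∈ cellIdx N) :
    toC hN i = ⟨i, hi⟩ := by
  unfold toC; exact Subtype.ext (clamp_of_mem (zmem_cell.1 hi).1 (zmem_cell.1 hi).2)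

lemma nExt_extC {N : ℕ} (hN : 0 < N) (v) (i j k : ℤ) :
    nExt N (extC hN v) i j k = extC hN v i j k := by
  unfold nExt extC
  rw [toC_clamp, toC_clamp, toC_clamp]

lemma sum_triple_eq {N : ℕ} (f : ℤ → ℤ → ℤ → ℝ) :
    ∑ c : CellT N × CellT N × CellT N, f c.1 c.2.1 c.2.2
      = ∑ i ∈ cellIdx N, ∑ j ∈ cellIdx N, ∑ k ∈ cellIdx N, f i j k := by
  rw [Fintype.sum_prod_type]
  rw [← Finset.sum_coe_sort (cellIdx N)
    (fun i => ∑ j ∈ cellIdx N, ∑ k ∈ cellIdx N, f i j k)]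
  refine Finset.sum_congr rfl ?_
  intro a _
  rw [Fintype.sum_prod_type]
  rw [← Finset.sum_coe_sort (cellIdx N) (fun j => ∑ k ∈ cellIdx N, f a j k)]
  refine Finset.sum_congr rfl ?_
  intro b _
  rw [← Finset.sum_coe_sort (cellIdx N) (fun k => f a b k)]

/-- The shifted Neumann operator `v ↦ -Δ_h v + (Σ v)`. -/
def opTC {N : ℕ} (hN : 0 < N) (h : ℝ) :
    ((CellT N × CellT N × CellT N) → ℝ) →ₗ[ℝ] ((CellT N × CellT N × CellT N) → ℝ) where
  toFun v := fun c => -lapC N h (extC hN v) c.1 c.2.1 c.2.2 + ∑ c', v c'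
  map_add' u v := by
    funext c
    have hext : ∀ i j k : ℤ, extC hN (u + v) i j k = extC hN u i j k + extC hN v i j k := by
      intro i j k; unfold extC; simp
    simp only [lapC, nExt_extC, hext, Pi.add_apply, Finset.sum_add_distrib]
    ring
  map_smul' a v := by
    funext c
    have hext : ∀ i j k : ℤ, extC hN (a • v) i j k = a * extC hN v i j k := by
      intro i j k; unfold extC; simp
    simp only [lapC, nExt_extC, hext, Pi.smul_apply, smul_eq_mul, RingHom.id_apply]
    rw [← Finset.mul_sum]
    ring

/-- Triple sums split over pointwise sums. -/
lemma tsum3_add {N : ℕ} (f g : ℤ → ℤ → ℤ → ℝ) :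
    ∑ i ∈ cellIdx N, ∑ j ∈ cellIdx N, ∑ k ∈ cellIdx N, (f i j k + g i j k)
      = (∑ i ∈ cellIdx N, ∑ j ∈ cellIdx N, ∑ k ∈ cellIdx N, f i j k)
        + ∑ i ∈ cellIdx N, ∑ j ∈ cellIdx N, ∑ k ∈ cellIdx N, g i j k := by
  simp [Finset.sum_add_distrib]

lemma tsum3_sub {N : ℕ} (f g : ℤ → ℤ → ℤ → ℝ) :
    ∑ i ∈ cellIdx N, ∑ j ∈ cellIdx N, ∑ k ∈ cellIdx N, (f i j k - g i j k)
      = (∑ i ∈ cellIdx N, ∑ j ∈ cellIdx N, ∑ k ∈ cellIdx N, f i j k)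
        - ∑ i ∈ cellIdx N, ∑ j ∈ cellIdx N, ∑ k ∈ cellIdx N, g i j k := by
  simp [Finset.sum_sub_distrib]

lemma tsum3_congr {N : ℕ} {f g : ℤ → ℤ → ℤ → ℝ}
    (hfg : ∀ i j k : ℤ, f i j k = g i j k) :
    ∑ i ∈ cellIdx N, ∑ j ∈ cellIdx N, ∑ k ∈ cellIdx N, f i j k
      = ∑ i ∈ cellIdx N, ∑ j ∈ cellIdx N, ∑ k ∈ cellIdx N, g i j k := by
  exact Finset.sum_congr rfl fun i _ => Finset.sum_congr rfl fun j _ =>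
    Finset.sum_congr rfl fun k _ => hfg i j k

/-- A triple sum of x-differences of a field vanishing at the x-boundary faces. -/
lemma tsum_diffX {N : ℕ} (hN : 0 < N) (A : ℤ → ℤ → ℤ → ℝ)
    (h0 : ∀ j ∈ cellIdx N, ∀ k ∈ cellIdx N, A 0 j k = 0)
    (hTop : ∀ j ∈ cellIdx N, ∀ k ∈ cellIdx N, A (N:ℤ) j k = 0) :
    ∑ i ∈ cellIdx N, ∑ j ∈ cellIdx N, ∑ k ∈ cellIdx N, (A i j k - A (i-1) j k) = 0 := by
  have key : ∀ i : ℤ,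
      ∑ j ∈ cellIdx N, ∑ k ∈ cellIdx N, (A i j k - A (i-1) j k)
        = (fun a => ∑ j ∈ cellIdx N, ∑ k ∈ cellIdx N, A a j k) i
          - (fun a => ∑ j ∈ cellIdx N, ∑ k ∈ cellIdx N, A a j k) (i-1) := by
    intro i
    dsimp only
    rw [← Finset.sum_sub_distrib]
    exact Finset.sum_congr rfl fun j _ => by rw [← Finset.sum_sub_distrib]
  rw [Finset.sum_congr rfl fun i _ => key i]
  refine sum_cell_tele _ ?_ ?_
  · exact Finset.sum_eq_zero fun j hj => Finset.sum_eq_zero fun k hk => h0 j hj k hk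
  · exact Finset.sum_eq_zero fun j hj => Finset.sum_eq_zero fun k hk => hTop j hj k hk

lemma tsum_diffY {N : ℕ} (hN : 0 < N) (A : ℤ → ℤ → ℤ → ℝ)
    (h0 : ∀ i ∈ cellIdx N, ∀ k ∈ cellIdx N, A i 0 k = 0)
    (hTop : ∀ i ∈ cellIdx N, ∀ k ∈ cellIdx N, A i (N:ℤ) k = 0) :
    ∑ i ∈ cellIdx N, ∑ j ∈ cellIdx N, ∑ k ∈ cellIdx N, (A i j k - A i (j-1) k) = 0 := by
  refine Finset.sum_eq_zero fun i hi => ?_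
  have key : ∀ j : ℤ,
      ∑ k ∈ cellIdx N, (A i j k - A i (j-1) k)
        = (fun b => ∑ k ∈ cellIdx N, A i b k) j
          - (fun b => ∑ k ∈ cellIdx N, A i b k) (j-1) := by
    intro j; dsimp only; rw [← Finset.sum_sub_distrib]
  rw [Finset.sum_congr rfl fun j _ => key j]
  refine sum_cell_tele _ ?_ ?_
  · exact Finset.sum_eq_zero fun k hk => h0 i hi k hk
  · exact Finset.sum_eq_zero fun k hk => hTop i hi k hk

lemma tsum_diffZ {N : ℕ} (hN : 0 < N) (A : ℤ → ℤ → ℤ → ℝ)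
    (h0 : ∀ i ∈ cellIdx N, ∀ j ∈ cellIdx N, A i j 0 = 0)
    (hTop : ∀ i ∈ cellIdx N, ∀ j ∈ cellIdx N, A i j (N:ℤ) = 0) :
    ∑ i ∈ cellIdx N, ∑ j ∈ cellIdx N, ∑ k ∈ cellIdx N, (A i j k - A i j (k-1)) = 0 := by
  refine Finset.sum_eq_zero fun i hi => Finset.sum_eq_zero fun j hj => ?_
  have key : ∀ k : ℤ, A i j k - A i j (k-1)
      = (fun c => A i j c) k - (fun c => A i j c) (k-1) := fun k => rfl
  rw [Finset.sum_congr rfl fun k _ => key k]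
  exact sum_cell_tele _ (h0 i hi j hj) (hTop i hi j hj)

/-- Sum over all cells of the discrete divergence of a no-penetration field. -/
lemma sum_divH_zero {N : ℕ} (hN : 0 < N) {h : ℝ} (fx fy fz : ℤ → ℤ → ℤ → ℝ)
    (hf : NoPen N fx fy fz) :
    ∑ i ∈ cellIdx N, ∑ j ∈ cellIdx N, ∑ k ∈ cellIdx N, divH h fx fy fz i j k = 0 := by
  have hsplit : ∀ i j k : ℤ, divH h fx fy fz i j k =
      ((fx i j k - fx (i-1) j k) + ((fy i j k - fy i (j-1) k) + (fz i j k - fz i j (k-1)))) * (1/h) := by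
    intro i j k; rw [divH]; ring
  rw [tsum3_congr hsplit]
  have : ∀ (c : ℝ) (f : ℤ → ℤ → ℤ → ℝ),
      (∑ i ∈ cellIdx N, ∑ j ∈ cellIdx N, ∑ k ∈ cellIdx N, f i j k * c)
        = (∑ i ∈ cellIdx N, ∑ j ∈ cellIdx N, ∑ k ∈ cellIdx N, f i j k) * c := by
    intro c f; simp [← Finset.sum_mul]
  rw [this]
  rw [tsum3_add, tsum3_add,
    tsum_diffX hN fx (fun j hj k hk => (hf.1 j hj k hk).1) (fun j hj k hk => (hf.1 j hj k hk).2),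
    tsum_diffY hN fy (fun i hi k hk => (hf.2.1 i hi k hk).1) (fun i hi k hk => (hf.2.1 i hi k hk).2),
    tsum_diffZ hN fz (fun i hi j hj => (hf.2.2 i hi j hj).1) (fun i hi j hj => (hf.2.2 i hi j hj).2)]
  ring

/-- Sum of the Neumann Laplacian over all cells vanishes. -/
lemma sum_lapC_zero {N : ℕ} (hN : 0 < N) {h : ℝ} (φ : ℤ → ℤ → ℤ → ℝ) :
    ∑ i ∈ cellIdx N, ∑ j ∈ cellIdx N, ∑ k ∈ cellIdx N, lapC N h φ i j k = 0 := by
  have hsplit : ∀ i j k : ℤ, lapC N h φ i j k =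
      (((nExt N φ (i+1) j k - nExt N φ i j k) - (nExt N φ ((i-1)+1) j k - nExt N φ (i-1) j k))
      + (((nExt N φ i (j+1) k - nExt N φ i j k) - (nExt N φ i ((j-1)+1) k - nExt N φ i (j-1) k))
      + ((nExt N φ i j (k+1) - nExt N φ i j k) - (nExt N φ i j ((k-1)+1) - nExt N φ i j (k-1)))))
        * (1/h^2) := by
    intro i j k; rw [lapC, izm1p1 i, izm1p1 j, izm1p1 k]; ring
  rw [tsum3_congr hsplit]
  have hc : ∀ (c : ℝ) (f : ℤ → ℤ → ℤ → ℝ),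
      (∑ i ∈ cellIdx N, ∑ j ∈ cellIdx N, ∑ k ∈ cellIdx N, f i j k * c)
        = (∑ i ∈ cellIdx N, ∑ j ∈ cellIdx N, ∑ k ∈ cellIdx N, f i j k) * c := by
    intro c f; simp [← Finset.sum_mul]
  rw [hc, tsum3_add, tsum3_add]
  have hX := tsum_diffX hN (fun a b c => nExt N φ (a+1) b c - nExt N φ a b c)
    (fun j _ k _ => by
      rw [show (0:ℤ)+1 = 1 by ring]
      unfold nExt; rw [clamp_zero hN, clamp_one hN]; ring)
    (fun j _ k _ => by
      unfold nExt; rw [clamp_top hN, clamp_N hN]; ring)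
  have hY := tsum_diffY hN (fun a b c => nExt N φ a (b+1) c - nExt N φ a b c)
    (fun i _ k _ => by
      rw [show (0:ℤ)+1 = 1 by ring]
      unfold nExt; rw [clamp_zero hN, clamp_one hN]; ring)
    (fun i _ k _ => by
      unfold nExt; rw [clamp_top hN, clamp_N hN]; ring)
  have hZ := tsum_diffZ hN (fun a b c => nExt N φ a b (c+1) - nExt N φ a b c)
    (fun i _ j _ => by
      rw [show (0:ℤ)+1 = 1 by ring]
      unfold nExt; rw [clamp_zero hN, clamp_one hN]; ring)
    (fun i _ j _ => by
      unfold nExt; rw [clamp_top hN, clamp_N hN]; ring)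
  rw [hX, hY, hZ]; ring

end LinAlg
section Poisson

lemma extC_at_cell {N : ℕ} (hN : 0 < N) (v) {i j k : ℤ} (hi : i ∈ cellIdx N)
    (hj : j ∈ cellIdx N) (hk : k ∈ cellIdx N) :
    extC hN v i j k = v (⟨i, hi⟩, ⟨j, hj⟩, ⟨k, hk⟩) := by
  unfold extC; rw [toC_of_mem hN hi, toC_of_mem hN hj, toC_of_mem hN hk]

lemma extC_coe {N : ℕ} (hN : 0 < N) (v) (c : CellT N × CellT N × CellT N) :
    extC hN v c.1 c.2.1 c.2.2 = v c := by
  obtain ⟨⟨i, hi⟩, ⟨j, hj⟩, ⟨k, hk⟩⟩ := c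
  exact extC_at_cell hN v hi hj hk

lemma sum_opTC {N : ℕ} (hN : 0 < N) {h : ℝ} (v) :
    ∑ c : CellT N × CellT N × CellT N, opTC hN h v c
      = (Fintype.card (CellT N × CellT N × CellT N) : ℝ) * ∑ c', v c' := by
  have : ∀ c : CellT N × CellT N × CellT N, opTC hN h v c
      = -lapC N h (extC hN v) c.1 c.2.1 c.2.2 + ∑ c', v c' := fun c => rfl
  rw [Finset.sum_congr rfl fun c _ => this c, Finset.sum_add_distrib]
  rw [sum_triple_eq (fun i j k => -lapC N h (extC hN v) i j k)]
  have h1 : ∑ i ∈ cellIdx N, ∑ j ∈ cellIdx N, ∑ k ∈ cellIdx N,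
      -lapC N h (extC hN v) i j k = 0 := by
    have := sum_lapC_zero hN (h := h) (extC hN v)
    simp only [Finset.sum_neg_distrib, this, neg_zero]
  rw [h1, Finset.sum_const, Finset.card_univ, nsmul_eq_mul, zero_add]

lemma cardT_pos {N : ℕ} (hN : 0 < N) :
    0 < Fintype.card (CellT N × CellT N × CellT N) := by
  simp only [Fintype.card_prod, Fintype.card_coe, card_cell]
  positivity

lemma opTC_inj {N : ℕ} (hN : 0 < N) {h : ℝ} (hh : 0 < h) :
    Function.Injective (opTC (N := N) hN h) := by
  rw [injective_iff_map_eq_zero]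
  intro v hv
  have hsum : ∑ c : CellT N × CellT N × CellT N, opTC hN h v c = 0 := by
    rw [hv]; simp
  rw [sum_opTC hN] at hsum
  have hcard : (0:ℝ) < (Fintype.card (CellT N × CellT N × CellT N) : ℝ) := by
    exact_mod_cast cardT_pos hN
  have hS : ∑ c', v c' = 0 := by
    rcases mul_eq_zero.1 hsum with hc | hS
    · exact absurd hc (by positivity)
    · exact hS
  have hlap : ∀ i ∈ cellIdx N, ∀ j ∈ cellIdx N, ∀ k ∈ cellIdx N,
      lapC N h (extC hN v) i j k = 0 := by
    intro i hi j hj k hk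
    have := congrFun hv (⟨i, hi⟩, ⟨j, hj⟩, ⟨k, hk⟩)
    simp only [opTC, LinearMap.coe_mk, AddHom.coe_mk, Pi.zero_apply] at this
    rw [hS] at this
    linarith
  have hconst := lap_zero_const hN hh (extC hN v) hlap
  have h1c : (1:ℤ) ∈ cellIdx N := by rw [zmem_cell]; omega
  have hm : ∑ c' : CellT N × CellT N × CellT N, v c'
      = (Fintype.card (CellT N × CellT N × CellT N) : ℝ) * extC hN v 1 1 1 := by
    have : ∀ c : CellT N × CellT N × CellT N, v c = extC hN v 1 1 1 := by
      intro c
      rw [← extC_coe hN v c]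
      exact hconst c.1 c.1.2 c.2.1 c.2.1.2 c.2.2 c.2.2.2
    rw [Finset.sum_congr rfl fun c _ => this c, Finset.sum_const, Finset.card_univ,
      nsmul_eq_mul]
  rw [hS] at hm
  have hz : extC hN v 1 1 1 = 0 := by
    rcases mul_eq_zero.1 hm.symm with hc | hz
    · exact absurd hc (by positivity)
    · exact hz
  funext c
  rw [← extC_coe hN v c, hconst c.1 c.1.2 c.2.1 c.2.1.2 c.2.2 c.2.2.2, hz]
  rfl

/-- Existence and uniqueness for the discrete Neumann Poisson problem. -/
lemma poisson_solve {N : ℕ} (hN : 0 < N) {h : ℝ} (hh : 0 < h) (r : ℤ → ℤ → ℤ → ℝ)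
    (hr : ∑ i ∈ cellIdx N, ∑ j ∈ cellIdx N, ∑ k ∈ cellIdx N, r i j k = 0) :
    ∃ q : ℤ → ℤ → ℤ → ℝ, zeroMean N q ∧
      (∀ i ∈ cellIdx N, ∀ j ∈ cellIdx N, ∀ k ∈ cellIdx N,
        -lapC N h q i j k = r i j k) := by
  have hsurj := (LinearMap.injective_iff_surjective).1 (opTC_inj hN hh)
  obtain ⟨v, hv⟩ := hsurj (fun c => r c.1 c.2.1 c.2.2)
  have hS : ∑ c', v c' = 0 := by
    have h1 : ∑ c : CellT N × CellT N × CellT N, opTC hN h v c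
        = ∑ i ∈ cellIdx N, ∑ j ∈ cellIdx N, ∑ k ∈ cellIdx N, r i j k := by
      rw [hv]; exact sum_triple_eq _
    rw [sum_opTC hN, hr] at h1
    rcases mul_eq_zero.1 h1 with hc | hS
    · exact absurd hc (by
        have := cardT_pos (N := N) hN; positivity)
    · exact hS
  refine ⟨extC hN v, ?_, ?_⟩
  · unfold zeroMean
    rw [← sum_triple_eq (extC hN v)] at *
    rw [Finset.sum_congr rfl fun c _ => extC_coe hN v c]
    exact hS
  · intro i hi j hj k hk
    have := congrFun hv (⟨i, hi⟩, ⟨j, hj⟩, ⟨k, hk⟩)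
    simp only [opTC, LinearMap.coe_mk, AddHom.coe_mk] at this
    rw [hS, add_zero] at this
    exact this

/-- Uniqueness for zero-mean solutions with equal Laplacians. -/
lemma poisson_unique {N : ℕ} (hN : 0 < N) {h : ℝ} (hh : 0 < h) (p q : ℤ → ℤ → ℤ → ℝ)
    (hp : zeroMean N p) (hq : zeroMean N q)
    (hlap : ∀ i ∈ cellIdx N, ∀ j ∈ cellIdx N, ∀ k ∈ cellIdx N,
      lapC N h p i j k = lapC N h q i j k) :
    ∀ i ∈ cellIdx N, ∀ j ∈ cellIdx N, ∀ k ∈ cellIdx N, p i j k = q i j k := by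
  set φ : ℤ → ℤ → ℤ → ℝ := fun a b c => p a b c - q a b c with hφ
  have hlz : ∀ i ∈ cellIdx N, ∀ j ∈ cellIdx N, ∀ k ∈ cellIdx N, lapC N h φ i j k = 0 := by
    intro i hi j hj k hk
    rw [hφ, lapC_sub, hlap i hi j hj k hk]; ring
  have hconst := lap_zero_const hN hh φ hlz
  have hzm : ∑ i ∈ cellIdx N, ∑ j ∈ cellIdx N, ∑ k ∈ cellIdx N, φ i j k = 0 := by
    rw [hφ]
    rw [tsum3_sub p q]
    unfold zeroMean at hp hq
    rw [hp, hq]; ring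
  have hsum : ∑ i ∈ cellIdx N, ∑ j ∈ cellIdx N, ∑ k ∈ cellIdx N, φ i j k
      = (N:ℝ)^3 * φ 1 1 1 := by
    rw [Finset.sum_congr rfl fun i hi => Finset.sum_congr rfl fun j hj =>
      Finset.sum_congr rfl fun k hk => hconst i hi j hj k hk]
    simp [Finset.sum_const, card_cell, nsmul_eq_mul]
    ring
  rw [hzm] at hsum
  have hNne : (N:ℝ)^3 ≠ 0 := by positivity
  have hz : φ 1 1 1 = 0 := by
    rcases mul_eq_zero.1 hsum.symm with hc | hz
    · exact absurd hc hNne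
    · exact hz
  intro i hi j hj k hk
  have := hconst i hi j hj k hk
  rw [hz] at this
  have : p i j k - q i j k = 0 := this
  linarith

end Poisson
section Helm

def extX {N : ℕ} (hN : 0 < N) (v : (FaceT N × CellT N × CellT N) → ℝ) :
    ℤ → ℤ → ℤ → ℝ := fun i j k =>
  if hi : i ∈ faceIdx N then v (⟨i, hi⟩, toC hN j, toC hN k) else 0

lemma fExtX_extX {N : ℕ} (hN : 0 < N) (v) (i j k : ℤ) :
    fExtX N (extX hN v) i j k = extX hN v i j k := by
  unfold fExtX extX
  by_cases hi : i ∈ faceIdx N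
  · rw [dif_pos hi, dif_pos hi, toC_clamp, toC_clamp]
  · rw [dif_neg hi, dif_neg hi]

lemma extX_at_face {N : ℕ} (hN : 0 < N) (v) {i j k : ℤ} (hi : i ∈ faceIdx N)
    (hj : j ∈ cellIdx N) (hk : k ∈ cellIdx N) :
    extX hN v i j k = v (⟨i, hi⟩, ⟨j, hj⟩, ⟨k, hk⟩) := by
  unfold extX; rw [dif_pos hi, toC_of_mem hN hj, toC_of_mem hN hk]

lemma extX_coe {N : ℕ} (hN : 0 < N) (v) (c : FaceT N × CellT N × CellT N) :
    extX hN v c.1 c.2.1 c.2.2 = v c := by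
  obtain ⟨⟨i, hi⟩, ⟨j, hj⟩, ⟨k, hk⟩⟩ := c
  exact extX_at_face hN v hi hj hk

lemma extX_off {N : ℕ} (hN : 0 < N) (v) {i : ℤ} (j k : ℤ) (hi : i ∉ faceIdx N) :
    extX hN v i j k = 0 := by
  unfold extX; rw [dif_neg hi]

def opTX {N : ℕ} (hN : 0 < N) (h : ℝ) :
    ((FaceT N × CellT N × CellT N) → ℝ) →ₗ[ℝ] ((FaceT N × CellT N × CellT N) → ℝ) where
  toFun v := fun c => -lapFX N h (extX hN v) c.1 c.2.1 c.2.2 + v c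
  map_add' u v := by
    funext c
    have hext : ∀ i j k : ℤ, extX hN (u + v) i j k = extX hN u i j k + extX hN v i j k := by
      intro i j k; unfold extX; split <;> simp
    simp only [lapFX, fExtX_extX, hext, Pi.add_apply]
    ring
  map_smul' a v := by
    funext c
    have hext : ∀ i j k : ℤ, extX hN (a • v) i j k = a * extX hN v i j k := by
      intro i j k; unfold extX; split <;> simp
    simp only [lapFX, fExtX_extX, hext, Pi.smul_apply, smul_eq_mul, RingHom.id_apply]
    ring

lemma opTX_inj {N : ℕ} (hN : 0 < N) {h : ℝ} (hh : 0 < h) :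
    Function.Injective (opTX (N := N) hN h) := by
  rw [injective_iff_map_eq_zero]
  intro v hv
  have hz := maxpX hN hh (extX hN v)
    (fun j _ k _ => ⟨extX_off hN v j k (by rw [zmem_face]; omega),
      extX_off hN v j k (by rw [zmem_face]; omega)⟩)
    (by
      intro i hi j hj k hk
      have := congrFun hv (⟨i, hi⟩, ⟨j, hj⟩, ⟨k, hk⟩)
      simp only [opTX, LinearMap.coe_mk, AddHom.coe_mk, Pi.zero_apply] at this
      rw [extX_at_face hN v hi hj hk]
      exact this)
  funext c
  rw [← extX_coe hN v c]
  exact hz c.1 c.1.2 c.2.1 c.2.1.2 c.2.2 c.2.2.2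

/-- Existence for the x-face Helmholtz problem. -/
lemma helm_exists {N : ℕ} (hN : 0 < N) {h : ℝ} (hh : 0 < h) (g : ℤ → ℤ → ℤ → ℝ) :
    ∃ u : ℤ → ℤ → ℤ → ℝ,
      (∀ i j k : ℤ, i ∉ faceIdx N → u i j k = 0) ∧
      (∀ i ∈ faceIdx N, ∀ j ∈ cellIdx N, ∀ k ∈ cellIdx N,
        -lapFX N h u i j k + u i j k = -g i j k) := by
  have hsurj := (LinearMap.injective_iff_surjective).1 (opTX_inj hN hh)
  obtain ⟨v, hv⟩ := hsurj (fun c => -g c.1 c.2.1 c.2.2)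
  refine ⟨extX hN v, fun i j k hi => extX_off hN v j k hi, ?_⟩
  intro i hi j hj k hk
  have := congrFun hv (⟨i, hi⟩, ⟨j, hj⟩, ⟨k, hk⟩)
  simp only [opTX, LinearMap.coe_mk, AddHom.coe_mk] at this
  rw [extX_at_face hN v hi hj hk]
  exact this

end Helm
section Comm

/-- x-face Laplacian, set to zero at boundary faces. -/
def LB (N : ℕ) (h : ℝ) (ux : ℤ → ℤ → ℤ → ℝ) (i j k : ℤ) : ℝ :=
  if i ∈ faceIdx N then lapFX N h ux i j k else 0

lemma identU_x {N : ℕ} (hN : 0 < N) {h : ℝ} (ux : ℤ → ℤ → ℤ → ℝ)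
    (hb : ∀ j ∈ cellIdx N, ∀ k ∈ cellIdx N, ux 0 j k = 0 ∧ ux (N:ℤ) j k = 0) :
    ∀ i ∈ cellIdx N, ∀ j ∈ cellIdx N, ∀ k ∈ cellIdx N,
      (LB N h ux i j k - LB N h ux (i-1) j k) / h
        = lapC N h (fun a b c => (ux a b c - ux (a-1) b c) / h) i j k := by
  intro i hi j hj k hk
  have hi1 := (zmem_cell.1 hi).1; have hi2 := (zmem_cell.1 hi).2
  have hj1 := (zmem_cell.1 hj).1; have hj2 := (zmem_cell.1 hj).2
  have hk1 := (zmem_cell.1 hk).1; have hk2 := (zmem_cell.1 hk).2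
  have hcj : clampIdx N j = j := clamp_of_mem hj1 hj2
  have hck : clampIdx N k = k := clamp_of_mem hk1 hk2
  have hci : clampIdx N i = i := clamp_of_mem hi1 hi2
  have hjp := clamp_mem hN (j+1); have hjm := clamp_mem hN (j-1)
  have hkp := clamp_mem hN (k+1); have hkm := clamp_mem hN (k-1)
  by_cases hone : (N:ℤ) = 1
  · -- N = 1 : single cell, no interior faces
    have hii : i = 1 := by omega
    have hjj : j = 1 := by omega
    have hkk : k = 1 := by omega
    subst hii hjj hkk
    have hcall : ∀ t : ℤ, clampIdx N t = 1 := by intro t; unfold clampIdx; omega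
    have hz1 : ux 1 1 1 = 0 := by
      have := (hb 1 hj 1 hk).2; rwa [hone] at this
    have hz0 : ux 0 1 1 = 0 := (hb 1 hj 1 hk).1
    simp only [LB, lapC, nExt, hcall,
      if_neg (show (1:ℤ) ∉ faceIdx N by rw [zmem_face]; omega),
      if_neg (show (1:ℤ)-1 ∉ faceIdx N by rw [zmem_face]; omega)]
    rw [show (1:ℤ)-1 = 0 from by ring, hz1, hz0]
    ring
  · have hN2 : 2 ≤ (N:ℤ) := by omega
    by_cases hiL : i = 1
    · -- left boundary cell
      subst hiL
      have hf1 : (1:ℤ) ∈ faceIdx N := by rw [zmem_face]; omega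
      have hc2 : clampIdx N (1+1) = 1+1 := clamp_of_mem (by omega) (by omega)
      have hc0 : clampIdx N (1-1) = 1 := by rw [show (1:ℤ)-1 = 0 from by ring]; exact clamp_zero hN
      have hz1 : ux (1-1) j k = 0 := by rw [show (1:ℤ)-1 = 0 from by ring]; exact (hb j hj k hk).1
      have hz2 : ux (1-1) (clampIdx N (j+1)) k = 0 := by
        rw [show (1:ℤ)-1 = 0 from by ring]; exact (hb _ hjp k hk).1
      have hz3 : ux (1-1) (clampIdx N (j-1)) k = 0 := by
        rw [show (1:ℤ)-1 = 0 from by ring]; exact (hb _ hjm k hk).1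
      have hz4 : ux (1-1) j (clampIdx N (k+1)) = 0 := by
        rw [show (1:ℤ)-1 = 0 from by ring]; exact (hb j hj _ hkp).1
      have hz5 : ux (1-1) j (clampIdx N (k-1)) = 0 := by
        rw [show (1:ℤ)-1 = 0 from by ring]; exact (hb j hj _ hkm).1
      simp only [LB, lapC, nExt, lapFX, fExtX, if_pos hf1,
        if_neg (show (1:ℤ)-1 ∉ faceIdx N from by rw [zmem_face]; omega),
        hcj, hck, hci, hc2, hc0, izp1m1, clamp_clamp hN]
      rw [hz1, hz2, hz3, hz4, hz5]
      ring
    · by_cases hiR : i = (N:ℤ)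
      · -- right boundary cell
        have hfN : (N:ℤ) ∉ faceIdx N := by rw [zmem_face]; omega
        have hfm : (N:ℤ)-1 ∈ faceIdx N := by rw [zmem_face]; omega
        have hcp : clampIdx N ((N:ℤ)+1) = (N:ℤ) := clamp_top hN
        have hcm : clampIdx N ((N:ℤ)-1) = (N:ℤ)-1 := clamp_of_mem (by omega) (by omega)
        have hz1 : ux (N:ℤ) j k = 0 := (hb j hj k hk).2
        have hz2 : ux (N:ℤ) (clampIdx N (j+1)) k = 0 := (hb _ hjp k hk).2
        have hz3 : ux (N:ℤ) (clampIdx N (j-1)) k = 0 := (hb _ hjm k hk).2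
        have hz4 : ux (N:ℤ) j (clampIdx N (k+1)) = 0 := (hb j hj _ hkp).2
        have hz5 : ux (N:ℤ) j (clampIdx N (k-1)) = 0 := (hb j hj _ hkm).2
        subst hiR
        simp only [LB, lapC, nExt, lapFX, fExtX, if_pos hfm, if_neg hfN,
          hcj, hck, hci, hcp, hcm, izp1m1, izm1p1, clamp_clamp hN]
        rw [hz1, hz2, hz3, hz4, hz5]
        ring
      · -- interior cell
        have hf1 : i ∈ faceIdx N := by rw [zmem_face]; omega
        have hf2 : i-1 ∈ faceIdx N := by rw [zmem_face]; omega
        have hcp : clampIdx N (i+1) = i+1 := clamp_of_mem (by omega) (by omega)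
        have hcm : clampIdx N (i-1) = i-1 := clamp_of_mem (by omega) (by omega)
        simp only [LB, lapC, nExt, lapFX, fExtX, if_pos hf1, if_pos hf2,
          hcj, hck, hci, hcp, hcm, izp1m1, izm1p1, clamp_clamp hN]
        ring

end Comm
section Comm2

def LBy (N : ℕ) (h : ℝ) (uy : ℤ → ℤ → ℤ → ℝ) (i j k : ℤ) : ℝ :=
  if j ∈ faceIdx N then lapFY N h uy i j k else 0

def LBz (N : ℕ) (h : ℝ) (uz : ℤ → ℤ → ℤ → ℝ) (i j k : ℤ) : ℝ :=
  if k ∈ faceIdx N then lapFZ N h uz i j k else 0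

lemma identU_y {N : ℕ} (hN : 0 < N) {h : ℝ} (uy : ℤ → ℤ → ℤ → ℝ)
    (hb : ∀ i ∈ cellIdx N, ∀ k ∈ cellIdx N, uy i 0 k = 0 ∧ uy i (N:ℤ) k = 0) :
    ∀ i ∈ cellIdx N, ∀ j ∈ cellIdx N, ∀ k ∈ cellIdx N,
      (LBy N h uy i j k - LBy N h uy i (j-1) k) / h
        = lapC N h (fun a b c => (uy a b c - uy a (b-1) c) / h) i j k := by
  intro i hi j hj k hk
  have key := identU_x hN (h := h) (fun a b c => uy b a c)
    (fun j' hj' k' hk' => hb j' hj' k' hk') j hj i hi k hk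
  calc (LBy N h uy i j k - LBy N h uy i (j-1) k) / h
      = (LB N h (fun a b c => uy b a c) j i k
          - LB N h (fun a b c => uy b a c) (j-1) i k) / h := by
        unfold LB LBy
        rw [lapFY_swap uy i j k, lapFY_swap uy i (j-1) k]
    _ = lapC N h (fun a b c => ((fun a b c => uy b a c) a b c
          - (fun a b c => uy b a c) (a-1) b c) / h) j i k := key
    _ = lapC N h (fun a b c =>
          (fun a b c => (uy a b c - uy a (b-1) c) / h) b a c) j i k := rfl
    _ = lapC N h (fun a b c => (uy a b c - uy a (b-1) c) / h) i j k :=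
        lapC_swap12 _ j i k

lemma identU_z {N : ℕ} (hN : 0 < N) {h : ℝ} (uz : ℤ → ℤ → ℤ → ℝ)
    (hb : ∀ i ∈ cellIdx N, ∀ j ∈ cellIdx N, uz i j 0 = 0 ∧ uz i j (N:ℤ) = 0) :
    ∀ i ∈ cellIdx N, ∀ j ∈ cellIdx N, ∀ k ∈ cellIdx N,
      (LBz N h uz i j k - LBz N h uz i j (k-1)) / h
        = lapC N h (fun a b c => (uz a b c - uz a b (c-1)) / h) i j k := by
  intro i hi j hj k hk
  have key := identU_x hN (h := h) (fun a b c => uz c b a)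
    (fun j' hj' k' hk' => hb k' hk' j' hj') k hk j hj i hi
  calc (LBz N h uz i j k - LBz N h uz i j (k-1)) / h
      = (LB N h (fun a b c => uz c b a) k j i
          - LB N h (fun a b c => uz c b a) (k-1) j i) / h := by
        unfold LB LBz
        rw [lapFZ_swap uz i j k, lapFZ_swap uz i j (k-1)]
    _ = lapC N h (fun a b c => ((fun a b c => uz c b a) a b c
          - (fun a b c => uz c b a) (a-1) b c) / h) k j i := key
    _ = lapC N h (fun a b c =>
          (fun a b c => (uz a b c - uz a b (c-1)) / h) c b a) k j i := rfl
    _ = lapC N h (fun a b c => (uz a b c - uz a b (c-1)) / h) i j k :=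
        lapC_swap13 _ k j i

/-- Commutation: divergence of the (boundary-zeroed) face Laplacian equals the
cell Laplacian of the divergence. -/
lemma comm_div {N : ℕ} (hN : 0 < N) {h : ℝ} (ux uy uz : ℤ → ℤ → ℤ → ℝ)
    (hnp : NoPen N ux uy uz) :
    ∀ i ∈ cellIdx N, ∀ j ∈ cellIdx N, ∀ k ∈ cellIdx N,
      divH h (LB N h ux) (LBy N h uy) (LBz N h uz) i j k
        = lapC N h (fun a b c => divH h ux uy uz a b c) i j k := by
  intro i hi j hj k hk
  have hx := identU_x hN (h := h) ux hnp.1 i hi j hj k hk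
  have hy := identU_y hN (h := h) uy hnp.2.1 i hi j hj k hk
  have hz := identU_z hN (h := h) uz hnp.2.2 i hi j hj k hk
  have hfun : (fun a b c => divH h ux uy uz a b c) = (fun a b c =>
      (ux a b c - ux (a-1) b c) / h + (uy a b c - uy a (b-1) c) / h
        + (uz a b c - uz a b (c-1)) / h) := by
    funext a b c; rw [divH]; ring
  rw [hfun, lapC_add3, ← hx, ← hy, ← hz, divH]
  ring

lemma Dy_bdry0 {N : ℕ} (hN : 0 < N) {h : ℝ} (q : ℤ → ℤ → ℤ → ℝ) (i k : ℤ) :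
    Dy N h q i 0 k = 0 := by
  simp only [Dy, nExt, zero_add, clamp_zero hN, clamp_one hN, sub_self, zero_div]

lemma Dy_bdryN {N : ℕ} (hN : 0 < N) {h : ℝ} (q : ℤ → ℤ → ℤ → ℝ) (i k : ℤ) :
    Dy N h q i (N:ℤ) k = 0 := by
  simp only [Dy, nExt, clamp_top hN, clamp_N hN, sub_self, zero_div]

lemma Dz_bdry0 {N : ℕ} (hN : 0 < N) {h : ℝ} (q : ℤ → ℤ → ℤ → ℝ) (i j : ℤ) :
    Dz N h q i j 0 = 0 := by
  simp only [Dz, nExt, zero_add, clamp_zero hN, clamp_one hN, sub_self, zero_div]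

lemma Dz_bdryN {N : ℕ} (hN : 0 < N) {h : ℝ} (q : ℤ → ℤ → ℤ → ℝ) (i j : ℤ) :
    Dz N h q i j (N:ℤ) = 0 := by
  simp only [Dz, nExt, clamp_top hN, clamp_N hN, sub_self, zero_div]

end Comm2
section Master

/-- The pressure of any Stokes solution solves the Poisson equation. -/
lemma stokes_pressure {N : ℕ} (hN : 0 < N) {h : ℝ} (hh : 0 < h)
    (fx fy fz ux uy uz p : ℤ → ℤ → ℤ → ℝ) (hf : NoPen N fx fy fz)
    (hs : StokesSol N h fx fy fz ux uy uz p) :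
    ∀ i ∈ cellIdx N, ∀ j ∈ cellIdx N, ∀ k ∈ cellIdx N,
      lapC N h p i j k = -divH h fx fy fz i j k := by
  obtain ⟨hnp, hzm, hmx, hmy, hmz, hdiv⟩ := hs
  have hXf : ∀ a : ℤ, 0 ≤ a → a ≤ (N:ℤ) → ∀ j ∈ cellIdx N, ∀ k ∈ cellIdx N,
      Dx N h p a j k = LB N h ux a j k - ux a j k - fx a j k := by
    intro a h0 h1 j hj k hk
    by_cases hfa : a ∈ faceIdx N
    · have := hmx a hfa j hj k hk
      rw [LB, if_pos hfa]; linarith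
    · have h0N : a = 0 ∨ a = (N:ℤ) := by rw [zmem_face] at hfa; omega
      rcases h0N with rfl | rfl
      · rw [Dx_bdry0 hN, LB, if_neg hfa, (hnp.1 j hj k hk).1, (hf.1 j hj k hk).1]; ring
      · rw [Dx_bdryN hN, LB, if_neg hfa, (hnp.1 j hj k hk).2, (hf.1 j hj k hk).2]; ring
  have hYf : ∀ i ∈ cellIdx N, ∀ a : ℤ, 0 ≤ a → a ≤ (N:ℤ) → ∀ k ∈ cellIdx N,
      Dy N h p i a k = LBy N h uy i a k - uy i a k - fy i a k := by
    intro i hi a h0 h1 k hk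
    by_cases hfa : a ∈ faceIdx N
    · have := hmy i hi a hfa k hk
      rw [LBy, if_pos hfa]; linarith
    · have h0N : a = 0 ∨ a = (N:ℤ) := by rw [zmem_face] at hfa; omega
      rcases h0N with rfl | rfl
      · rw [Dy_bdry0 hN, LBy, if_neg hfa, (hnp.2.1 i hi k hk).1, (hf.2.1 i hi k hk).1]; ring
      · rw [Dy_bdryN hN, LBy, if_neg hfa, (hnp.2.1 i hi k hk).2, (hf.2.1 i hi k hk).2]; ring
  have hZf : ∀ i ∈ cellIdx N, ∀ j ∈ cellIdx N, ∀ a : ℤ, 0 ≤ a → a ≤ (N:ℤ) →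
      Dz N h p i j a = LBz N h uz i j a - uz i j a - fz i j a := by
    intro i hi j hj a h0 h1
    by_cases hfa : a ∈ faceIdx N
    · have := hmz i hi j hj a hfa
      rw [LBz, if_pos hfa]; linarith
    · have h0N : a = 0 ∨ a = (N:ℤ) := by rw [zmem_face] at hfa; omega
      rcases h0N with rfl | rfl
      · rw [Dz_bdry0 hN, LBz, if_neg hfa, (hnp.2.2 i hi j hj).1, (hf.2.2 i hi j hj).1]; ring
      · rw [Dz_bdryN hN, LBz, if_neg hfa, (hnp.2.2 i hi j hj).2, (hf.2.2 i hi j hj).2]; ring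
  intro i hi j hj k hk
  have hi1 := (zmem_cell.1 hi).1; have hi2 := (zmem_cell.1 hi).2
  have hj1 := (zmem_cell.1 hj).1; have hj2 := (zmem_cell.1 hj).2
  have hk1 := (zmem_cell.1 hk).1; have hk2 := (zmem_cell.1 hk).2
  have e0 : lapC N h p i j k = divH h (Dx N h p) (Dy N h p) (Dz N h p) i j k :=
    (div_grad p i j k).symm
  rw [e0, divH,
    hXf i (by omega) (by omega) j hj k hk,
    hXf (i-1) (by omega) (by omega) j hj k hk,
    hYf i hi j (by omega) (by omega) k hk,
    hYf i hi (j-1) (by omega) (by omega) k hk,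
    hZf i hi j hj k (by omega) (by omega),
    hZf i hi j hj (k-1) (by omega) (by omega)]
  have hcd := comm_div hN (h := h) ux uy uz hnp i hi j hj k hk
  have hlz : lapC N h (fun a b c => divH h ux uy uz a b c) i j k = 0 :=
    lapC_zero_on hN (fun a ha b hb c hc => hdiv a ha b hb c hc) i j k
  have hdz : divH h ux uy uz i j k = 0 := hdiv i hi j hj k hk
  rw [divH] at hcd hdz
  rw [divH]
  linear_combination hcd + hlz - hdz

/-- Velocity produced by the projected Helmholtz problems is divergence free. -/
lemma projected_div0 {N : ℕ} (hN : 0 < N) {h : ℝ} (hh : 0 < h)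
    (fx fy fz q ux uy uz : ℤ → ℤ → ℤ → ℝ) (hf : NoPen N fx fy fz)
    (hq : ∀ i ∈ cellIdx N, ∀ j ∈ cellIdx N, ∀ k ∈ cellIdx N,
      -lapC N h q i j k = divH h fx fy fz i j k)
    (hnp : NoPen N ux uy uz)
    (hmx : ∀ i ∈ faceIdx N, ∀ j ∈ cellIdx N, ∀ k ∈ cellIdx N,
      -lapFX N h ux i j k + ux i j k = -(fx i j k + Dx N h q i j k))
    (hmy : ∀ i ∈ cellIdx N, ∀ j ∈ faceIdx N, ∀ k ∈ cellIdx N,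
      -lapFY N h uy i j k + uy i j k = -(fy i j k + Dy N h q i j k))
    (hmz : ∀ i ∈ cellIdx N, ∀ j ∈ cellIdx N, ∀ k ∈ faceIdx N,
      -lapFZ N h uz i j k + uz i j k = -(fz i j k + Dz N h q i j k)) :
    ∀ i ∈ cellIdx N, ∀ j ∈ cellIdx N, ∀ k ∈ cellIdx N,
      divH h ux uy uz i j k = 0 := by
  have hXf : ∀ a : ℤ, 0 ≤ a → a ≤ (N:ℤ) → ∀ j ∈ cellIdx N, ∀ k ∈ cellIdx N,
      LB N h ux a j k = ux a j k + fx a j k + Dx N h q a j k := by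
    intro a h0 h1 j hj k hk
    by_cases hfa : a ∈ faceIdx N
    · have := hmx a hfa j hj k hk
      rw [LB, if_pos hfa]; linarith
    · have h0N : a = 0 ∨ a = (N:ℤ) := by rw [zmem_face] at hfa; omega
      rcases h0N with rfl | rfl
      · rw [Dx_bdry0 hN, LB, if_neg hfa, (hnp.1 j hj k hk).1, (hf.1 j hj k hk).1]; ring
      · rw [Dx_bdryN hN, LB, if_neg hfa, (hnp.1 j hj k hk).2, (hf.1 j hj k hk).2]; ring
  have hYf : ∀ i ∈ cellIdx N, ∀ a : ℤ, 0 ≤ a → a ≤ (N:ℤ) → ∀ k ∈ cellIdx N,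
      LBy N h uy i a k = uy i a k + fy i a k + Dy N h q i a k := by
    intro i hi a h0 h1 k hk
    by_cases hfa : a ∈ faceIdx N
    · have := hmy i hi a hfa k hk
      rw [LBy, if_pos hfa]; linarith
    · have h0N : a = 0 ∨ a = (N:ℤ) := by rw [zmem_face] at hfa; omega
      rcases h0N with rfl | rfl
      · rw [Dy_bdry0 hN, LBy, if_neg hfa, (hnp.2.1 i hi k hk).1, (hf.2.1 i hi k hk).1]; ring
      · rw [Dy_bdryN hN, LBy, if_neg hfa, (hnp.2.1 i hi k hk).2, (hf.2.1 i hi k hk).2]; ring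
  have hZf : ∀ i ∈ cellIdx N, ∀ j ∈ cellIdx N, ∀ a : ℤ, 0 ≤ a → a ≤ (N:ℤ) →
      LBz N h uz i j a = uz i j a + fz i j a + Dz N h q i j a := by
    intro i hi j hj a h0 h1
    by_cases hfa : a ∈ faceIdx N
    · have := hmz i hi j hj a hfa
      rw [LBz, if_pos hfa]; linarith
    · have h0N : a = 0 ∨ a = (N:ℤ) := by rw [zmem_face] at hfa; omega
      rcases h0N with rfl | rfl
      · rw [Dz_bdry0 hN, LBz, if_neg hfa, (hnp.2.2 i hi j hj).1, (hf.2.2 i hi j hj).1]; ring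
      · rw [Dz_bdryN hN, LBz, if_neg hfa, (hnp.2.2 i hi j hj).2, (hf.2.2 i hi j hj).2]; ring
  have key : ∀ i ∈ cellIdx N, ∀ j ∈ cellIdx N, ∀ k ∈ cellIdx N,
      -lapC N h (fun a b c => divH h ux uy uz a b c) i j k
        + divH h ux uy uz i j k = 0 := by
    intro i hi j hj k hk
    have hi1 := (zmem_cell.1 hi).1; have hi2 := (zmem_cell.1 hi).2
    have hj1 := (zmem_cell.1 hj).1; have hj2 := (zmem_cell.1 hj).2
    have hk1 := (zmem_cell.1 hk).1; have hk2 := (zmem_cell.1 hk).2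
    have hcd := comm_div hN (h := h) ux uy uz hnp i hi j hj k hk
    have hdg := div_grad (N := N) (h := h) q i j k
    have hpq := hq i hi j hj k hk
    have hX1 := hXf i (by omega) (by omega) j hj k hk
    have hX2 := hXf (i-1) (by omega) (by omega) j hj k hk
    have hY1 := hYf i hi j (by omega) (by omega) k hk
    have hY2 := hYf i hi (j-1) (by omega) (by omega) k hk
    have hZ1 := hZf i hi j hj k (by omega) (by omega)
    have hZ2 := hZf i hi j hj (k-1) (by omega) (by omega)
    rw [divH] at hcd hdg hpq
    rw [divH]
    linear_combination hcd - (hX1 - hX2 + hY1 - hY2 + hZ1 - hZ2) / h - hdg + hpq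
  exact maxpC hN hh _ key

/-- Helmholtz existence for the y-component. -/
lemma helm_exists_y {N : ℕ} (hN : 0 < N) {h : ℝ} (hh : 0 < h) (g : ℤ → ℤ → ℤ → ℝ) :
    ∃ u : ℤ → ℤ → ℤ → ℝ,
      (∀ i j k : ℤ, j ∉ faceIdx N → u i j k = 0) ∧
      (∀ i ∈ cellIdx N, ∀ j ∈ faceIdx N, ∀ k ∈ cellIdx N,
        -lapFY N h u i j k + u i j k = -g i j k) := by
  obtain ⟨w, hw0, hwe⟩ := helm_exists hN hh (fun a b c => g b a c)
  refine ⟨fun i j k => w j i k, fun i j k hj => hw0 j i k hj, ?_⟩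
  intro i hi j hj k hk
  have := hwe j hj i hi k hk
  rw [lapFY_swap]
  exact this

/-- Helmholtz existence for the z-component. -/
lemma helm_exists_z {N : ℕ} (hN : 0 < N) {h : ℝ} (hh : 0 < h) (g : ℤ → ℤ → ℤ → ℝ) :
    ∃ u : ℤ → ℤ → ℤ → ℝ,
      (∀ i j k : ℤ, k ∉ faceIdx N → u i j k = 0) ∧
      (∀ i ∈ cellIdx N, ∀ j ∈ cellIdx N, ∀ k ∈ faceIdx N,
        -lapFZ N h u i j k + u i j k = -g i j k) := by
  obtain ⟨w, hw0, hwe⟩ := helm_exists hN hh (fun a b c => g c b a)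
  refine ⟨fun i j k => w k j i, fun i j k hk => hw0 k j i hk, ?_⟩
  intro i hi j hj k hk
  have := hwe k hk j hj i hi
  rw [lapFZ_swap]
  exact this

/-- Uniqueness for the projected problem. -/
lemma proj_unique {N : ℕ} (hN : 0 < N) {h : ℝ} (hh : 0 < h)
    (gx gy gz ux uy uz vx vy vz : ℤ → ℤ → ℤ → ℝ)
    (hu : ProjSol N h gx gy gz ux uy uz) (hv : ProjSol N h gx gy gz vx vy vz) :
    MacEqOn N vx vy vz ux uy uz := by
  obtain ⟨hun, hux, huy, huz⟩ := hu
  obtain ⟨hvn, hvx, hvy, hvz⟩ := hv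
  have hX : ∀ i ∈ faceIdx N, ∀ j ∈ cellIdx N, ∀ k ∈ cellIdx N,
      vx i j k - ux i j k = 0 := by
    refine maxpX hN hh (fun a b c => vx a b c - ux a b c) ?_ ?_
    · intro j hj k hk
      constructor
      · rw [(hvn.1 j hj k hk).1, (hun.1 j hj k hk).1]; ring
      · rw [(hvn.1 j hj k hk).2, (hun.1 j hj k hk).2]; ring
    · intro i hi j hj k hk
      have e1 := hvx i hi j hj k hk
      have e2 := hux i hi j hj k hk
      have e3 : lapFX N h (fun a b c => vx a b c - ux a b c) i j k
          = lapFX N h vx i j k - lapFX N h ux i j k := lapFX_sub vx ux i j k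
      rw [e3]; linarith
  have hY : ∀ j ∈ faceIdx N, ∀ i ∈ cellIdx N, ∀ k ∈ cellIdx N,
      vy i j k - uy i j k = 0 := by
    have := maxpX hN hh (fun a b c => vy b a c - uy b a c)
      (fun j hj k hk => ⟨by rw [(hvn.2.1 j hj k hk).1, (hun.2.1 j hj k hk).1]; ring,
        by rw [(hvn.2.1 j hj k hk).2, (hun.2.1 j hj k hk).2]; ring⟩)
      (by
        intro j hj i hi k hk
        have e1 := hvy i hi j hj k hk
        have e2 := huy i hi j hj k hk
        rw [lapFY_swap] at e1 e2
        have e3 : lapFX N h (fun a b c => vy b a c - uy b a c) j i k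
            = lapFX N h (fun a b c => vy b a c) j i k
              - lapFX N h (fun a b c => uy b a c) j i k :=
          lapFX_sub (fun a b c => vy b a c) (fun a b c => uy b a c) j i k
        rw [e3]; linarith)
    intro j hj i hi k hk
    exact this j hj i hi k hk
  have hZ : ∀ k ∈ faceIdx N, ∀ i ∈ cellIdx N, ∀ j ∈ cellIdx N,
      vz i j k - uz i j k = 0 := by
    have := maxpX hN hh (fun a b c => vz c b a - uz c b a)
      (fun j hj k hk => ⟨by rw [(hvn.2.2 k hk j hj).1, (hun.2.2 k hk j hj).1]; ring,
        by rw [(hvn.2.2 k hk j hj).2, (hun.2.2 k hk j hj).2]; ring⟩)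
      (by
        intro k hk j hj i hi
        have e1 := hvz i hi j hj k hk
        have e2 := huz i hi j hj k hk
        rw [lapFZ_swap] at e1 e2
        have e3 : lapFX N h (fun a b c => vz c b a - uz c b a) k j i
            = lapFX N h (fun a b c => vz c b a) k j i
              - lapFX N h (fun a b c => uz c b a) k j i :=
          lapFX_sub (fun a b c => vz c b a) (fun a b c => uz c b a) k j i
        rw [e3]; linarith)
    intro k hk i hi j hj
    exact this k hk j hj i hi
  refine ⟨?_, ?_, ?_⟩
  · intro i hi j hj k hk
    rw [Finset.mem_Icc] at hi
    by_cases h0 : i = 0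
    · subst h0; rw [(hvn.1 j hj k hk).1, (hun.1 j hj k hk).1]
    by_cases hN' : i = (N:ℤ)
    · subst hN'; rw [(hvn.1 j hj k hk).2, (hun.1 j hj k hk).2]
    · have := hX i (by rw [zmem_face]; omega) j hj k hk; linarith
  · intro i hi j hj k hk
    rw [Finset.mem_Icc] at hj
    by_cases h0 : j = 0
    · subst h0; rw [(hvn.2.1 i hi k hk).1, (hun.2.1 i hi k hk).1]
    by_cases hN' : j = (N:ℤ)
    · subst hN'; rw [(hvn.2.1 i hi k hk).2, (hun.2.1 i hi k hk).2]
    · have := hY j (by rw [zmem_face]; omega) i hi k hk; linarith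
  · intro i hi j hj k hk
    rw [Finset.mem_Icc] at hk
    by_cases h0 : k = 0
    · subst h0; rw [(hvn.2.2 i hi j hj).1, (hun.2.2 i hi j hj).1]
    by_cases hN' : k = (N:ℤ)
    · subst hN'; rw [(hvn.2.2 i hi j hj).2, (hun.2.2 i hi j hj).2]
    · have := hZ k (by rw [zmem_face]; omega) i hi j hj; linarith

end Master
/-- for a MAC field `f` with no-penetration boundary values,
(1) the discrete Stokes problem `-Δ_h u + u + ∇_h p = -f`, `∇_h·u = 0` has a
solution `(u,p)`, unique among no-penetration/free-slip fields and zero-mean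
pressures; and (2) this `u` is also the unique no-penetration/free-slip
solution of `-Δ_h u + u = -P_H^h f`, where `P_H^h f = f + ∇_h q` and `q` is
the unique zero-mean solution of `-Δ_h q = ∇_h · f`. -/
theorem stokes_two_forms (L : ℝ) (hL : 0 < L) (N : ℕ) (hN : 0 < N)
    (fx fy fz : ℤ → ℤ → ℤ → ℝ) (hf : NoPen N fx fy fz) :
    (∃ ux uy uz p, StokesSol N (L / N) fx fy fz ux uy uz p ∧
      ∀ vx vy vz q, StokesSol N (L / N) fx fy fz vx vy vz q →
        MacEqOn N vx vy vz ux uy uz ∧ CellEqOn N q p) ∧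
    (∀ ux uy uz p, StokesSol N (L / N) fx fy fz ux uy uz p →
      ∀ q : ℤ → ℤ → ℤ → ℝ, zeroMean N q →
        (∀ i ∈ cellIdx N, ∀ j ∈ cellIdx N, ∀ k ∈ cellIdx N,
          -lapC N (L / N) q i j k = divH (L / N) fx fy fz i j k) →
        ProjSol N (L / N)
          (fun a b c => fx a b c + Dx N (L / N) q a b c)
          (fun a b c => fy a b c + Dy N (L / N) q a b c)
          (fun a b c => fz a b c + Dz N (L / N) q a b c) ux uy uz ∧
        ∀ vx vy vz, ProjSol N (L / N)
            (fun a b c => fx a b c + Dx N (L / N) q a b c)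
            (fun a b c => fy a b c + Dy N (L / N) q a b c)
            (fun a b c => fz a b c + Dz N (L / N) q a b c) vx vy vz →
          MacEqOn N vx vy vz ux uy uz) := by
  have hh : 0 < L / (N:ℝ) := div_pos hL (by exact_mod_cast hN)
  set h : ℝ := L / (N:ℝ) with hdef
  -- pressure Poisson for arbitrary solutions
  have hPress : ∀ vx vy vz q, StokesSol N h fx fy fz vx vy vz q →
      ∀ i ∈ cellIdx N, ∀ j ∈ cellIdx N, ∀ k ∈ cellIdx N,
        lapC N h q i j k = -divH h fx fy fz i j k :=
    fun vx vy vz q hs => stokes_pressure hN hh fx fy fz vx vy vz q hf hs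
  -- any Stokes solution solves the projected problem w.r.t. any Poisson pressure
  have key2 : ∀ wx wy wz p, StokesSol N h fx fy fz wx wy wz p →
      ∀ q : ℤ → ℤ → ℤ → ℝ, zeroMean N q →
      (∀ i ∈ cellIdx N, ∀ j ∈ cellIdx N, ∀ k ∈ cellIdx N,
        -lapC N h q i j k = divH h fx fy fz i j k) →
      ProjSol N h
        (fun a b c => fx a b c + Dx N h q a b c)
        (fun a b c => fy a b c + Dy N h q a b c)
        (fun a b c => fz a b c + Dz N h q a b c) wx wy wz := by
    intro wx wy wz p hs q hqzm hqeq
    have hpeq : ∀ i ∈ cellIdx N, ∀ j ∈ cellIdx N, ∀ k ∈ cellIdx N,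
        p i j k = q i j k := by
      refine poisson_unique hN hh p q hs.2.1 hqzm ?_
      intro i hi j hj k hk
      rw [hPress wx wy wz p hs i hi j hj k hk]
      have := hqeq i hi j hj k hk; linarith
    have hnxt : ∀ i j k : ℤ, nExt N q i j k = nExt N p i j k := by
      intro i j k
      unfold nExt
      exact (hpeq _ (clamp_mem hN i) _ (clamp_mem hN j) _ (clamp_mem hN k)).symm
    have hDx : ∀ i j k : ℤ, Dx N h q i j k = Dx N h p i j k := by
      intro i j k; unfold Dx; rw [hnxt, hnxt]
    have hDy : ∀ i j k : ℤ, Dy N h q i j k = Dy N h p i j k := by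
      intro i j k; unfold Dy; rw [hnxt, hnxt]
    have hDz : ∀ i j k : ℤ, Dz N h q i j k = Dz N h p i j k := by
      intro i j k; unfold Dz; rw [hnxt, hnxt]
    refine ⟨hs.1, ?_, ?_, ?_⟩
    · intro i hi j hj k hk
      have := hs.2.2.1 i hi j hj k hk
      dsimp only
      rw [hDx]; linarith
    · intro i hi j hj k hk
      have := hs.2.2.2.1 i hi j hj k hk
      dsimp only
      rw [hDy]; linarith
    · intro i hi j hj k hk
      have := hs.2.2.2.2.1 i hi j hj k hk
      dsimp only
      rw [hDz]; linarith
  -- construction of the solution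
  have hrsum := sum_divH_zero hN (h := h) fx fy fz hf
  obtain ⟨q0, hq0zm, hq0eq⟩ := poisson_solve hN hh
    (fun a b c => divH h fx fy fz a b c) hrsum
  have hq0eq' : ∀ i ∈ cellIdx N, ∀ j ∈ cellIdx N, ∀ k ∈ cellIdx N,
      -lapC N h q0 i j k = divH h fx fy fz i j k :=
    fun i hi j hj k hk => hq0eq i hi j hj k hk
  obtain ⟨ux, hux0, huxe⟩ := helm_exists hN hh (fun a b c => fx a b c + Dx N h q0 a b c)
  obtain ⟨uy, huy0, huye⟩ := helm_exists_y hN hh (fun a b c => fy a b c + Dy N h q0 a b c)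
  obtain ⟨uz, huz0, huze⟩ := helm_exists_z hN hh (fun a b c => fz a b c + Dz N h q0 a b c)
  have h0f : (0:ℤ) ∉ faceIdx N := by rw [zmem_face]; omega
  have hNf : (N:ℤ) ∉ faceIdx N := by rw [zmem_face]; omega
  have hnp : NoPen N ux uy uz :=
    ⟨fun j _ k _ => ⟨hux0 0 j k h0f, hux0 N j k hNf⟩,
     fun i _ k _ => ⟨huy0 i 0 k h0f, huy0 i (N:ℤ) k hNf⟩,
     fun i _ j _ => ⟨huz0 i j 0 h0f, huz0 i j (N:ℤ) hNf⟩⟩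
  have hmx' : ∀ i ∈ faceIdx N, ∀ j ∈ cellIdx N, ∀ k ∈ cellIdx N,
      -lapFX N h ux i j k + ux i j k = -(fx i j k + Dx N h q0 i j k) :=
    fun i hi j hj k hk => huxe i hi j hj k hk
  have hmy' : ∀ i ∈ cellIdx N, ∀ j ∈ faceIdx N, ∀ k ∈ cellIdx N,
      -lapFY N h uy i j k + uy i j k = -(fy i j k + Dy N h q0 i j k) :=
    fun i hi j hj k hk => huye i hi j hj k hk
  have hmz' : ∀ i ∈ cellIdx N, ∀ j ∈ cellIdx N, ∀ k ∈ faceIdx N,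
      -lapFZ N h uz i j k + uz i j k = -(fz i j k + Dz N h q0 i j k) :=
    fun i hi j hj k hk => huze i hi j hj k hk
  have hdiv0 := projected_div0 hN hh fx fy fz q0 ux uy uz hf hq0eq' hnp hmx' hmy' hmz'
  have hstokes : StokesSol N h fx fy fz ux uy uz q0 := by
    refine ⟨hnp, hq0zm, ?_, ?_, ?_, hdiv0⟩
    · intro i hi j hj k hk
      have := hmx' i hi j hj k hk; linarith
    · intro i hi j hj k hk
      have := hmy' i hi j hj k hk; linarith
    · intro i hi j hj k hk
      have := hmz' i hi j hj k hk; linarith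
  have hprojU : ProjSol N h
      (fun a b c => fx a b c + Dx N h q0 a b c)
      (fun a b c => fy a b c + Dy N h q0 a b c)
      (fun a b c => fz a b c + Dz N h q0 a b c) ux uy uz :=
    ⟨hnp, hmx', hmy', hmz'⟩
  constructor
  · refine ⟨ux, uy, uz, q0, hstokes, ?_⟩
    intro vx vy vz q hs
    constructor
    · exact proj_unique hN hh _ _ _ ux uy uz vx vy vz hprojU
        (key2 vx vy vz q hs q0 hq0zm hq0eq')
    · -- CellEqOn q q0
      refine poisson_unique hN hh q q0 hs.2.1 hq0zm ?_
      intro i hi j hj k hk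
      rw [hPress vx vy vz q hs i hi j hj k hk]
      have := hq0eq' i hi j hj k hk; linarith
  · intro ux1 uy1 uz1 p hs q hqzm hqeq
    refine ⟨key2 ux1 uy1 uz1 p hs q hqzm hqeq, ?_⟩
    intro vx vy vz hv
    exact proj_unique hN hh _ _ _ ux1 uy1 uz1 vx vy vz
      (key2 ux1 uy1 uz1 p hs q hqzm hqeq) hv
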